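/- arXiv:2204.13466 — 4 statements merged into one kernel-verified Lean document; each statement's English description precedes it below -/
import Mathlib

section
/- Let 𝒞 be a clustering system on a finite set X. Then there exists a level-1 network N on X with 𝒞_N = 𝒞 if and only if 𝒞 is closed and satisfies property (L). -/
namespace PhyloNet

/-- A (rooted) network on a set `X` of taxa: a finite directed acyclic graph with a
unique vertex of indegree 0 (the root), whose vertices of outdegree 0 (the leaves)
are exactly the elements of `X` (via the injection `leafEmb`). -/
structure Network (X : Type) where
  V : Type
  [fintypeV : Fintype V]
  E : V → V → Prop
  leafEmb : X → V
  leafEmb_inj : Function.Injective leafEmb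
  acyclic : ∀ u v : V, E u v → ¬ Relation.ReflTransGen E v u
  root_unique : ∃! r : V, ∀ u : V, ¬ E u r
  leaf_iff : ∀ v : V, (∀ w : V, ¬ E v w) ↔ ∃ x : X, leafEmb x = v

attribute [instance] Network.fintypeV

variable {X : Type}

namespace Network

/-- `reach u v` : there is a directed path (possibly trivial) from `u` to `v`,
i.e. `v ⪯ u`. -/
def reach (N : Network X) : N.V → N.V → Prop := Relation.ReflTransGen N.E

/-- The cluster of a vertex: the set of leaves reachable from it. -/
def cluster (N : Network X) (v : N.V) : Set X := {x | N.reach v (N.leafEmb x)}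

/-- The clustering system of a network. -/
def CS (N : Network X) : Set (Set X) := Set.range N.cluster

noncomputable def inDeg (N : Network X) (v : N.V) : ℕ := {u | N.E u v}.ncard
noncomputable def outDeg (N : Network X) (v : N.V) : ℕ := {w | N.E v w}.ncard

def IsHybrid (N : Network X) (v : N.V) : Prop := 1 < N.inDeg v
def IsTreeVertex (N : Network X) (v : N.V) : Prop := N.inDeg v ≤ 1
def IsLeaf (N : Network X) (v : N.V) : Prop := ∀ w : N.V, ¬ N.E v w

/-- The arc `(u,w)` is a shortcut: `w ≺ v` for some child `v ≠ w` of `u`. -/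
def IsShortcut (N : Network X) (u w : N.V) : Prop :=
  N.E u w ∧ ∃ v : N.V, N.E u v ∧ v ≠ w ∧ N.reach v w

def ShortcutFree (N : Network X) : Prop := ∀ u w : N.V, ¬ N.IsShortcut u w

/-- Path-cluster comparability. -/
def PCC (N : Network X) : Prop :=
  ∀ u v : N.V, (N.reach u v ∨ N.reach v u) ↔
    (N.cluster u ⊆ N.cluster v ∨ N.cluster v ⊆ N.cluster u)

def SemiRegular (N : Network X) : Prop := N.ShortcutFree ∧ N.PCC

/-- `N` is regular iff `v ↦ C(v)` is a digraph isomorphism onto the Hasse diagram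
of `𝒞_N` (ordered by inclusion). -/
def Regular (N : Network X) : Prop :=
  Function.Injective N.cluster ∧
  ∀ u v : N.V, N.E u v ↔
    (N.cluster v ⊂ N.cluster u ∧
      ¬ ∃ w : N.V, N.cluster v ⊂ N.cluster w ∧ N.cluster w ⊂ N.cluster u)

def Separated (N : Network X) : Prop := ∀ v : N.V, N.IsHybrid v → N.outDeg v = 1

def Phylogenetic (N : Network X) : Prop := ¬ ∃ v : N.V, N.outDeg v = 1 ∧ N.inDeg v ≤ 1

def Binary (N : Network X) : Prop :=
  (∀ v : N.V, N.IsTreeVertex v → (N.IsLeaf v ∨ N.outDeg v = 2)) ∧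
  (∀ v : N.V, N.IsHybrid v → N.inDeg v = 2 ∧ N.outDeg v = 1)

def TreeChild (N : Network X) : Prop :=
  ∀ v : N.V, ¬ N.IsLeaf v → ∃ u : N.V, N.E v u ∧ N.inDeg u = 1

/-- The underlying undirected (simple) graph of a network. -/
def UG (N : Network X) : SimpleGraph N.V where
  Adj u v := u ≠ v ∧ (N.E u v ∨ N.E v u)
  symm := ⟨fun _ _ h => ⟨Ne.symm h.1, Or.symm h.2⟩⟩
  loopless := ⟨fun _ h => h.1 rfl⟩

/-- A set of vertices is biconnected if it induces a connected undirected graph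
with no cutvertex. -/
def IsBiconn (N : Network X) (B : Set N.V) : Prop :=
  (N.UG.induce B).Connected ∧ ∀ v ∈ B, (N.UG.induce (B \ {v})).Preconnected

/-- A block: a maximal biconnected set of vertices. -/
def IsBlock (N : Network X) (B : Set N.V) : Prop :=
  N.IsBiconn B ∧ ∀ B' : Set N.V, B ⊆ B' → N.IsBiconn B' → B' = B

/-- The set `B` contains an undirected cycle (`B` is a non-trivial block when it is
a block). -/
def HasCycleIn (N : Network X) (B : Set N.V) : Prop :=
  ∃ (v : N.V) (c : N.UG.Walk v v), c.IsCycle ∧ ∀ w ∈ c.support, w ∈ B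

/-- Level-1: each block contains at most one hybrid vertex that is not
`⪯`-maximal in the block. -/
def Level1 (N : Network X) : Prop :=
  ∀ B : Set N.V, N.IsBlock B →
    Set.Subsingleton {v : N.V | v ∈ B ∧ N.IsHybrid v ∧ ∃ u ∈ B, u ≠ v ∧ N.reach u v}

/-- The set `B` (with the edges of the underlying undirected graph between its
members) is exactly an undirected cycle. -/
def IsCycleSet (N : Network X) (B : Set N.V) : Prop :=
  ∃ (v : N.V) (c : N.UG.Walk v v), c.IsCycle ∧ (∀ w : N.V, w ∈ c.support ↔ w ∈ B) ∧
    ∀ u w : N.V, (N.UG.Adj u w ∧ u ∈ B ∧ w ∈ B) ↔ s(u, w) ∈ c.edges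

/-- A galled tree: every non-trivial block is an undirected cycle. -/
def GalledTree (N : Network X) : Prop :=
  ∀ B : Set N.V, N.IsBlock B → N.HasCycleIn B → N.IsCycleSet B

/-- Quasi-binary: hybrid vertices have indegree 2 and outdegree 1, and the
`⪯`-maximal vertex of every non-trivial block has outdegree 2. -/
def QuasiBinary (N : Network X) : Prop :=
  (∀ v : N.V, N.IsHybrid v → N.inDeg v = 2 ∧ N.outDeg v = 1) ∧
  ∀ B : Set N.V, N.IsBlock B → N.HasCycleIn B →
    ∀ v ∈ B, (∀ u ∈ B, N.reach u v → u = v) → N.outDeg v = 2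

/-- `LCA A`: the `⪯`-minimal vertices among the common ancestors of `A`. -/
def LCA (N : Network X) (A : Set X) : Set N.V :=
  {v : N.V | A ⊆ N.cluster v ∧ ∀ u : N.V, A ⊆ N.cluster u → N.reach v u → u = v}

/-- An lca-network: every nonempty set of leaves has a unique least common
ancestor. -/
def LcaNetwork (N : Network X) : Prop :=
  ∀ A : Set X, A.Nonempty → ∃ v : N.V, N.LCA A = {v}

/-- A strong lca-network. -/
def StrongLca (N : Network X) : Prop :=
  N.LcaNetwork ∧
  ∀ A : Set X, A.Nonempty → ∃ x ∈ A, ∃ y ∈ A, N.LCA ({x, y} : Set X) = N.LCA A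

/-- Cluster networks in the sense of Huson & Rupp. -/
def ClusterNetwork (N : Network X) : Prop :=
  N.PCC ∧
  (∀ u v : N.V, N.cluster u = N.cluster v ↔
    (u = v ∨ (N.IsHybrid v ∧ N.E v u) ∨ (N.IsHybrid u ∧ N.E u v))) ∧
  (∀ u v : N.V, N.E v u →
    ¬ ∃ w : N.V, N.cluster u ⊂ N.cluster w ∧ N.cluster w ⊂ N.cluster v) ∧
  (∀ v : N.V, N.IsHybrid v →
    ∃ u : N.V, N.E v u ∧ (∀ w : N.V, N.E v w → w = u) ∧ N.IsTreeVertex u)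

/-- The multiplicity of a cluster in the cluster multiset `𝓜_N`. -/
noncomputable def multiplicity (N : Network X) (C : Set X) : ℕ :=
  Nat.card {v : N.V // N.cluster v = C}

/-- Isomorphism of networks on the same leaf set `X`, fixing every leaf. -/
def Isomorphic (N N' : Network X) : Prop :=
  ∃ φ : N.V ≃ N'.V, (∀ u v : N.V, N.E u v ↔ N'.E (φ u) (φ v)) ∧
    ∀ x : X, φ (N.leafEmb x) = N'.leafEmb x

end Network

/-- A clustering system on `X`. -/
def IsClusteringSystem {X : Type} (𝒞 : Set (Set X)) : Prop :=
  ∅ ∉ 𝒞 ∧ Set.univ ∈ 𝒞 ∧ ∀ x : X, {x} ∈ 𝒞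

/-- Two sets overlap if `A ∩ B ∉ {∅, A, B}`. -/
def Overlap {X : Type} (A B : Set X) : Prop :=
  (A ∩ B).Nonempty ∧ A ∩ B ≠ A ∧ A ∩ B ≠ B

/-- Closed (under pairwise nonempty intersections). -/
def IsClosedCS {X : Type} (𝒞 : Set (Set X)) : Prop :=
  ∀ A ∈ 𝒞, ∀ B ∈ 𝒞, (A ∩ B).Nonempty → A ∩ B ∈ 𝒞

/-- Property (L). -/
def PropertyL {X : Type} (𝒞 : Set (Set X)) : Prop :=
  ∀ C₁ ∈ 𝒞, ∀ C₂ ∈ 𝒞, ∀ C₃ ∈ 𝒞, Overlap C₁ C₂ → Overlap C₁ C₃ → C₁ ∩ C₂ = C₁ ∩ C₃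

/-- Weak hierarchy. -/
def WeakHierarchy {X : Type} (𝒞 : Set (Set X)) : Prop :=
  ∀ C₁ ∈ 𝒞, ∀ C₂ ∈ 𝒞, ∀ C₃ ∈ 𝒞,
    C₁ ∩ C₂ ∩ C₃ = C₁ ∩ C₂ ∨ C₁ ∩ C₂ ∩ C₃ = C₁ ∩ C₃ ∨
    C₁ ∩ C₂ ∩ C₃ = C₂ ∩ C₃ ∨ C₁ ∩ C₂ ∩ C₃ = ∅

/-- Property (N3O): no three distinct pairwise overlapping clusters. -/
def N3O {X : Type} (𝒞 : Set (Set X)) : Prop :=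
  ¬ ∃ C₁ ∈ 𝒞, ∃ C₂ ∈ 𝒞, ∃ C₃ ∈ 𝒞,
    C₁ ≠ C₂ ∧ C₁ ≠ C₃ ∧ C₂ ≠ C₃ ∧ Overlap C₁ C₂ ∧ Overlap C₁ C₃ ∧ Overlap C₂ C₃

/-- Property (2-Inc). -/
def TwoInc {X : Type} (𝒞 : Set (Set X)) : Prop :=
  ∀ C ∈ 𝒞,
    {A : Set X | A ∈ 𝒞 ∧ A ⊂ C ∧ ∀ B ∈ 𝒞, B ⊂ C → A ⊆ B → A = B}.ncard ≤ 2 ∧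
    {A : Set X | A ∈ 𝒞 ∧ C ⊂ A ∧ ∀ B ∈ 𝒞, C ⊂ B → B ⊆ A → A = B}.ncard ≤ 2

/-- The intersection closure: all nonempty intersections of nonempty subfamilies. -/
def interClosure {X : Type} (𝒞 : Set (Set X)) : Set (Set X) :=
  {A : Set X | A.Nonempty ∧ ∃ S : Set (Set X), S ⊆ 𝒞 ∧ S.Nonempty ∧ A = ⋂₀ S}

section Aux
set_option linter.unusedSectionVars false
open Relation

namespace Network

variable {X : Type} {N : Network X}

lemma reach_refl (N : Network X) (v : N.V) : N.reach v v := ReflTransGen.refl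

lemma reach_trans {a b c : N.V} (h : N.reach a b) (h' : N.reach b c) : N.reach a c :=
  ReflTransGen.trans h h'

lemma reach_of_E {a b : N.V} (h : N.E a b) : N.reach a b := ReflTransGen.single h

lemma E_ne {a b : N.V} (h : N.E a b) : a ≠ b := by
  rintro rfl; exact N.acyclic a a h ReflTransGen.refl

lemma reach_antisymm {a b : N.V} (h : N.reach a b) (h' : N.reach b a) : a = b := by
  rcases ReflTransGen.cases_head h with rfl | ⟨c, hac, hcb⟩
  · rfl
  · exact absurd (reach_trans hcb h') (N.acyclic a c hac)

lemma cluster_mono {a b : N.V} (h : N.reach a b) : N.cluster b ⊆ N.cluster a :=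
  fun _ hx => reach_trans h hx

lemma adj_of_E {a b : N.V} (h : N.E a b) : N.UG.Adj a b := ⟨E_ne h, Or.inl h⟩

/-- reachability within an induced vertex set -/
def RIn (N : Network X) (K : Set N.V) (a b : N.V) : Prop :=
  ∃ (ha : a ∈ K) (hb : b ∈ K), (N.UG.induce K).Reachable ⟨a, ha⟩ ⟨b, hb⟩

lemma rin_refl {K : Set N.V} {a : N.V} (ha : a ∈ K) : N.RIn K a a := ⟨ha, ha, .refl _⟩

lemma rin_symm {K : Set N.V} {a b : N.V} (h : N.RIn K a b) : N.RIn K b a := by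
  obtain ⟨ha, hb, r⟩ := h; exact ⟨hb, ha, r.symm⟩

lemma rin_trans {K : Set N.V} {a b c : N.V} (h : N.RIn K a b) (h' : N.RIn K b c) :
    N.RIn K a c := by
  obtain ⟨ha, hb, r⟩ := h; obtain ⟨hb', hc, r'⟩ := h'
  have heq : (⟨b, hb⟩ : K) = ⟨b, hb'⟩ := rfl
  exact ⟨ha, hc, r.trans (heq ▸ r')⟩

lemma rin_adj {K : Set N.V} {a b : N.V} (h : N.UG.Adj a b) (ha : a ∈ K) (hb : b ∈ K) :
    N.RIn K a b :=
  ⟨ha, hb, SimpleGraph.Adj.reachable (by exact h)⟩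

lemma rin_of_walk {K : Set N.V} : ∀ {x y : K}, (N.UG.induce K).Walk x y →
    ∀ {K' : Set N.V}, K ⊆ K' → N.RIn K' x.1 y.1 := by
  intro x y w
  induction w with
  | nil => intro K' hKK; exact rin_refl (hKK (Subtype.mem _))
  | @cons a b c h _ ih =>
      intro K' hKK
      exact rin_trans (rin_adj (by exact h) (hKK a.2) (hKK b.2)) (ih hKK)

lemma rin_mono {K K' : Set N.V} (hKK : K ⊆ K') {a b : N.V} (h : N.RIn K a b) :
    N.RIn K' a b := by
  obtain ⟨ha, hb, ⟨w⟩⟩ := h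
  exact rin_of_walk w hKK

lemma rin_invariant_aux {K S : Set N.V}
    (hinv : ∀ a b, N.UG.Adj a b → a ∈ K → b ∈ K → a ∈ S → b ∈ S) :
    ∀ {x y : K}, (N.UG.induce K).Walk x y → x.1 ∈ S → y.1 ∈ S := by
  intro x y w
  induction w with
  | nil => exact id
  | @cons p q s h _ ih => exact fun hp => ih (hinv p q (by exact h) p.2 q.2 hp)

lemma rin_invariant {K S : Set N.V}
    (hinv : ∀ a b, N.UG.Adj a b → a ∈ K → b ∈ K → a ∈ S → b ∈ S)
    {a b : N.V} (h : N.RIn K a b) (haS : a ∈ S) : b ∈ S := by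
  obtain ⟨ha, hb, ⟨w⟩⟩ := h
  exact rin_invariant_aux hinv w haS

lemma rin_first_step {K : Set N.V} {a b : N.V} (h : N.RIn K a b) (hne : a ≠ b) :
    ∃ c ∈ K, N.UG.Adj a c := by
  obtain ⟨ha, hb, ⟨w⟩⟩ := h
  cases w with
  | nil => exact absurd rfl hne
  | @cons _ c _ h _ => exact ⟨c.1, c.2, by exact h⟩

lemma preconnected_iff_rin {K : Set N.V} :
    (N.UG.induce K).Preconnected ↔ ∀ a ∈ K, ∀ b ∈ K, N.RIn K a b := by
  constructor
  · intro h a ha b hb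
    exact ⟨ha, hb, h ⟨a, ha⟩ ⟨b, hb⟩⟩
  · intro h x y
    obtain ⟨ha, hb, r⟩ := h x.1 x.2 y.1 y.2
    have hx : x = ⟨x.1, ha⟩ := rfl
    have hy : y = ⟨y.1, hb⟩ := rfl
    rw [hx, hy]; exact r

lemma biconn_rin {B : Set N.V} (hB : N.IsBiconn B) {a b : N.V} (ha : a ∈ B) (hb : b ∈ B) :
    N.RIn B a b :=
  preconnected_iff_rin.mp hB.1.preconnected a ha b hb

lemma biconn_del_rin {B : Set N.V} (hB : N.IsBiconn B) (g : N.V) {a b : N.V}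
    (ha : a ∈ B \ {g}) (hb : b ∈ B \ {g}) : N.RIn (B \ {g}) a b := by
  by_cases hg : g ∈ B
  · exact preconnected_iff_rin.mp (hB.2 g hg) a ha b hb
  · have : B \ {g} = B := Set.diff_singleton_eq_self hg
    rw [this] at ha hb ⊢
    exact biconn_rin hB ha hb

/-- the master cut lemma: if all edges leaving `S` end at the gate `g`, a biconnected
set cannot contain both a vertex in `S` and a vertex outside `S ∪ {g}`. -/
lemma biconn_cut {B : Set N.V} (hB : N.IsBiconn B) (g : N.V) (S : Set N.V) (hgS : g ∉ S)
    (hedge : ∀ a b, N.UG.Adj a b → a ∈ S → b ∉ S → b = g)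
    {a b : N.V} (ha : a ∈ B) (haS : a ∈ S) (hb : b ∈ B) (hbS : b ∉ S) (hbg : b ≠ g) :
    False := by
  have hag : a ≠ g := fun h => hgS (h ▸ haS)
  have hr : N.RIn (B \ {g}) a b :=
    biconn_del_rin hB g ⟨ha, hag⟩ ⟨hb, hbg⟩
  have : b ∈ S := by
    refine rin_invariant (S := S) ?_ hr haS
    intro x y hxy hx hy hxS
    by_contra hyS
    exact hy.2 (hedge x y hxy hxS hyS)
  exact hbS this

lemma biconn_union {B₁ B₂ : Set N.V} (h₁ : N.IsBiconn B₁) (h₂ : N.IsBiconn B₂)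
    {a b : N.V} (ha₁ : a ∈ B₁) (ha₂ : a ∈ B₂) (hb₁ : b ∈ B₁) (hb₂ : b ∈ B₂) (hab : a ≠ b) :
    N.IsBiconn (B₁ ∪ B₂) := by
  constructor
  · rw [SimpleGraph.connected_iff]
    constructor
    · rw [preconnected_iff_rin]
      intro x hx y hy
      have hax : ∀ z ∈ B₁ ∪ B₂, N.RIn (B₁ ∪ B₂) z a := by
        intro z hz
        rcases hz with hz | hz
        · exact rin_mono Set.subset_union_left (biconn_rin h₁ hz ha₁)
        · exact rin_mono Set.subset_union_right (biconn_rin h₂ hz ha₂)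
      exact rin_trans (hax x hx) (rin_symm (hax y hy))
    · exact ⟨⟨a, Or.inl ha₁⟩⟩
  · intro v hv
    rw [preconnected_iff_rin]
    intro x hx y hy
    -- a shared vertex distinct from v
    obtain ⟨s, hs₁, hs₂, hsv⟩ : ∃ s, s ∈ B₁ ∧ s ∈ B₂ ∧ s ≠ v := by
      by_cases hav : a = v
      · exact ⟨b, hb₁, hb₂, fun h => hab (hav ▸ h ▸ rfl)⟩
      · exact ⟨a, ha₁, ha₂, hav⟩
    have hside : ∀ z ∈ (B₁ ∪ B₂) \ {v}, N.RIn ((B₁ ∪ B₂) \ {v}) z s := by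
      intro z hz
      rcases hz.1 with hz1 | hz2
      · exact rin_mono (Set.diff_subset_diff_left Set.subset_union_left)
          (biconn_del_rin h₁ v ⟨hz1, hz.2⟩ ⟨hs₁, hsv⟩)
      · exact rin_mono (Set.diff_subset_diff_left Set.subset_union_right)
          (biconn_del_rin h₂ v ⟨hz2, hz.2⟩ ⟨hs₂, hsv⟩)
    exact rin_trans (hside x hx) (rin_symm (hside y hy))

lemma exists_block {S : Set N.V} (hS : N.IsBiconn S) : ∃ B, N.IsBlock B ∧ S ⊆ B := by
  have hfam : ({B : Set N.V | N.IsBiconn B ∧ S ⊆ B}).Finite := Set.toFinite _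
  obtain ⟨B, hB, hmax⟩ := Set.Finite.exists_maximalFor id _ hfam ⟨S, hS, subset_rfl⟩
  refine ⟨B, ⟨hB.1, ?_⟩, hB.2⟩
  intro B' hBB' hB'
  exact Set.Subset.antisymm (@hmax B' ⟨hB', hB.2.trans hBB'⟩ hBB') hBB'

lemma two_neighbors {B : Set N.V} (hB : N.IsBiconn B) {a b c v : N.V}
    (ha : a ∈ B) (hb : b ∈ B) (hc : c ∈ B)
    (hab : a ≠ b) (hac : a ≠ c) (hbc : b ≠ c) (hv : v ∈ B) :
    ∃ n₁ ∈ B, ∃ n₂ ∈ B, n₁ ≠ n₂ ∧ N.UG.Adj v n₁ ∧ N.UG.Adj v n₂ := by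
  -- two elements of {a,b,c} different from v
  obtain ⟨t, t', ht, ht', htv, ht'v, htt'⟩ :
      ∃ t t', t ∈ B ∧ t' ∈ B ∧ t ≠ v ∧ t' ≠ v ∧ t ≠ t' := by
    by_cases hva : v = a
    · subst hva; exact ⟨b, c, hb, hc, fun h => hab h.symm, fun h => hac h.symm, hbc⟩
    · by_cases hvb : v = b
      · subst hvb; exact ⟨a, c, ha, hc, fun h => hva h.symm, fun h => hbc h.symm, hac⟩
      · exact ⟨a, b, ha, hb, fun h => hva h.symm, fun h => hvb h.symm, hab⟩
  obtain ⟨n₁, hn₁, hadj₁⟩ := rin_first_step (biconn_rin hB hv ht) (fun h => htv h.symm)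
  have hvn₁ : v ≠ n₁ := hadj₁.ne
  -- a target distinct from v and n₁
  obtain ⟨t₂, ht₂, ht₂v, ht₂n⟩ : ∃ t₂, t₂ ∈ B ∧ t₂ ≠ v ∧ t₂ ≠ n₁ := by
    by_cases h : t = n₁
    · subst h; exact ⟨t', ht', ht'v, fun hh => htt' hh.symm⟩
    · exact ⟨t, ht, htv, h⟩
  obtain ⟨n₂, hn₂, hadj₂⟩ := rin_first_step
    (biconn_del_rin hB n₁ ⟨hv, hvn₁⟩ ⟨ht₂, ht₂n⟩) (fun h => ht₂v h.symm)
  exact ⟨n₁, hn₁, n₂, hn₂.1, fun h => hn₂.2 (by simp [h.symm]), hadj₁, hadj₂⟩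

lemma transGen_irrefl (N : Network X) (a : N.V) : ¬ Relation.TransGen N.E a a := by
  intro h
  cases h with
  | single hb => exact N.acyclic a a hb ReflTransGen.refl
  | tail hab hba => exact N.acyclic _ _ hba hab.to_reflTransGen

lemma wf_desc (N : Network X) : WellFounded (fun x y : N.V => Relation.TransGen N.E x y) := by
  letI : IsTrans N.V (fun x y : N.V => Relation.TransGen N.E x y) :=
    ⟨fun _ _ _ hab hbc => hab.trans hbc⟩
  letI : IsIrrefl N.V (fun x y : N.V => Relation.TransGen N.E x y) :=
    ⟨fun a h => transGen_irrefl N a h⟩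
  exact Finite.wellFounded_of_trans_of_irrefl _

lemma wf_asc (N : Network X) : WellFounded (fun x y : N.V => Relation.TransGen N.E y x) := by
  letI : IsTrans N.V (fun x y : N.V => Relation.TransGen N.E y x) :=
    ⟨fun _ _ _ hab hbc => hbc.trans hab⟩
  letI : IsIrrefl N.V (fun x y : N.V => Relation.TransGen N.E y x) :=
    ⟨fun a h => transGen_irrefl N a h⟩
  exact Finite.wellFounded_of_trans_of_irrefl _

lemma reach_eq_or_transGen {a b : N.V} (h : N.reach a b) :
    a = b ∨ Relation.TransGen N.E a b := by
  rcases ReflTransGen.cases_head h with rfl | ⟨c, hac, hcb⟩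
  · exact Or.inl rfl
  · exact Or.inr (Relation.TransGen.head' hac hcb)

lemma root_reaches (N : Network X) : ∃ r : N.V, ∀ v : N.V, N.reach r v := by
  obtain ⟨r, hr, hru⟩ := N.root_unique
  refine ⟨r, ?_⟩
  by_contra hcon
  push_neg at hcon
  obtain ⟨m, hm, hmin⟩ := (wf_desc N).has_min {w : N.V | ¬ N.reach r w} hcon
  by_cases hpar : ∀ u, ¬ N.E u m
  · exact hm (hru m hpar ▸ ReflTransGen.refl)
  · push_neg at hpar
    obtain ⟨p, hp⟩ := hpar
    have hpS : p ∉ {w : N.V | ¬ N.reach r w} := fun hpS => hmin p hpS (Relation.TransGen.single hp)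
    simp only [Set.mem_setOf_eq, not_not] at hpS
    exact hm (hpS.tail hp)

/-- a minimal common ancestor of two vertices -/
lemma exists_min_anc (N : Network X) (u v : N.V) :
    ∃ r : N.V, N.reach r u ∧ N.reach r v ∧
      ∀ y, N.reach r y → N.reach y u → N.reach y v → y = r := by
  obtain ⟨r₀, hr₀⟩ := root_reaches N
  obtain ⟨m, hm, hmin⟩ := (wf_asc N).has_min {w : N.V | N.reach w u ∧ N.reach w v}
    ⟨r₀, hr₀ u, hr₀ v⟩
  refine ⟨m, hm.1, hm.2, ?_⟩
  intro y hmy hyu hyv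
  rcases reach_eq_or_transGen hmy with rfl | htg
  · rfl
  · exact absurd htg (hmin y ⟨hyu, hyv⟩)

/-- directed paths carrying their vertex lists -/
inductive DP (N : Network X) : N.V → N.V → List N.V → Prop
  | single (v : N.V) : DP N v v [v]
  | cons {u v w : N.V} {l : List N.V} : N.E u v → DP N v w l → DP N u w (u :: l)

lemma dp_mem_left {u w : N.V} {l : List N.V} (d : N.DP u w l) : u ∈ l := by
  cases d with
  | single => exact List.mem_singleton_self _
  | cons h d => exact List.mem_cons_self

lemma dp_mem_right {u w : N.V} {l : List N.V} (d : N.DP u w l) : w ∈ l := by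
  induction d with
  | single => exact List.mem_singleton_self _
  | cons h d ih => exact List.mem_cons_of_mem _ ih

lemma dp_reach {u w : N.V} {l : List N.V} (d : N.DP u w l) : N.reach u w := by
  induction d with
  | single => exact ReflTransGen.refl
  | cons h d ih => exact ReflTransGen.head h ih

lemma dp_mem_reach {u w : N.V} {l : List N.V} (d : N.DP u w l) {x : N.V} (hx : x ∈ l) :
    N.reach u x ∧ N.reach x w := by
  induction d with
  | single v =>
      rw [List.mem_singleton] at hx
      subst hx; exact ⟨ReflTransGen.refl, ReflTransGen.refl⟩
  | @cons a b c l h d ih =>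
      rcases List.mem_cons.mp hx with rfl | hx
      · exact ⟨ReflTransGen.refl, ReflTransGen.head h (dp_reach d)⟩
      · exact ⟨ReflTransGen.head h (ih hx).1, (ih hx).2⟩

lemma dp_of_reach {u w : N.V} (h : N.reach u w) : ∃ l, N.DP u w l := by
  induction h using ReflTransGen.head_induction_on with
  | refl => exact ⟨[w], DP.single w⟩
  | head h' _ ih =>
      obtain ⟨l, hl⟩ := ih
      exact ⟨_ :: l, DP.cons h' hl⟩

lemma dp_not_mem_of_E {u v w : N.V} {l : List N.V} (h : N.E u v) (d : N.DP v w l) : u ∉ l := by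
  intro hu
  exact N.acyclic u v h (dp_mem_reach d hu).1

lemma dp_self {v : N.V} {l : List N.V} (d : N.DP v v l) : l = [v] := by
  cases d with
  | single => rfl
  | cons h d => exact absurd (dp_reach d) (N.acyclic _ _ h)

lemma dp_penult {u h : N.V} {l : List N.V} (d : N.DP u h l) (hne : u ≠ h) :
    ∃ p, p ∈ l ∧ p ≠ h ∧ N.E p h := by
  induction d with
  | single => exact absurd rfl hne
  | @cons a b c l hab d ih =>
      by_cases hbc : b = c
      · subst hbc
        exact ⟨a, List.mem_cons_self, hne, hab⟩
      · obtain ⟨p, hp, hph, hpE⟩ := ih hbc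
        exact ⟨p, List.mem_cons_of_mem _ hp, hph, hpE⟩

/-- split off the prefix ending at the first element belonging to `S` -/
lemma dp_first {u w : N.V} {l : List N.V} (d : N.DP u w l) (S : Set N.V) (hw : w ∈ S) :
    ∃ h l', N.DP u h l' ∧ h ∈ S ∧ (∀ y ∈ l', y = h ∨ y ∉ S) ∧ (∀ y ∈ l', y ∈ l) := by
  induction d with
  | single v => exact ⟨v, [v], DP.single v, hw, fun y hy => Or.inl (List.mem_singleton.mp hy),
      fun y hy => hy⟩
  | @cons a b c l hab d ih =>
      by_cases haS : a ∈ S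
      · exact ⟨a, [a], DP.single a, haS, fun y hy => Or.inl (List.mem_singleton.mp hy),
          fun y hy => (List.mem_singleton.mp hy) ▸ List.mem_cons_self⟩
      · obtain ⟨h, l', hdp, hhS, hfirst, hsub⟩ := ih hw
        refine ⟨h, a :: l', DP.cons hab hdp, hhS, ?_, ?_⟩
        · intro y hy
          rcases List.mem_cons.mp hy with rfl | hy
          · exact Or.inr haS
          · exact hfirst y hy
        · intro y hy
          rcases List.mem_cons.mp hy with rfl | hy
          · exact List.mem_cons_self
          · exact List.mem_cons_of_mem _ (hsub y hy)

/-- split a path at any of its elements (prefix part) -/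
lemma dp_split_at {u w : N.V} {l : List N.V} (d : N.DP u w l) {x : N.V} (hx : x ∈ l) :
    ∃ l', N.DP u x l' ∧ ∀ y ∈ l', y ∈ l := by
  induction d with
  | single v =>
      rw [List.mem_singleton] at hx
      subst hx; exact ⟨[x], DP.single x, fun y hy => hy⟩
  | @cons a b c l hab d ih =>
      rcases List.mem_cons.mp hx with rfl | hx
      · exact ⟨[x], DP.single x, fun y hy => (List.mem_singleton.mp hy) ▸ List.mem_cons_self⟩
      · obtain ⟨l', hdp, hsub⟩ := ih hx
        exact ⟨a :: l', DP.cons hab hdp, fun y hy => by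
          rcases List.mem_cons.mp hy with rfl | hy
          · exact List.mem_cons_self
          · exact List.mem_cons_of_mem _ (hsub y hy)⟩

lemma arc_all {a b : N.V} {l : List N.V} (d : N.DP a b l) {K : Set N.V}
    (hsub : ∀ y ∈ l, y ∈ K) : ∀ c ∈ l, N.RIn K c a ∧ N.RIn K c b := by
  induction d with
  | single v =>
      intro c hc
      rw [List.mem_singleton] at hc
      subst hc
      exact ⟨rin_refl (hsub c (List.mem_singleton_self _)),
        rin_refl (hsub c (List.mem_singleton_self _))⟩
  | @cons p q w l hpq d ih =>
      intro c hc
      have hpK : p ∈ K := hsub p (List.mem_cons_self)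
      have hqK : q ∈ K := hsub q (List.mem_cons_of_mem _ (dp_mem_left d))
      have hsub' : ∀ y ∈ l, y ∈ K := fun y hy => hsub y (List.mem_cons_of_mem _ hy)
      rcases List.mem_cons.mp hc with rfl | hc
      · refine ⟨rin_refl hpK, ?_⟩
        exact rin_trans (rin_adj (adj_of_E hpq) hpK hqK) ((ih hsub' q (dp_mem_left d)).2)
      · obtain ⟨hcq, hcw⟩ := ih hsub' c hc
        exact ⟨rin_trans hcq (rin_adj (adj_of_E hpq).symm hqK hpK), hcw⟩

lemma arc_split {a b : N.V} {l : List N.V} (d : N.DP a b l) (t : N.V) {K : Set N.V}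
    (hsub : ∀ y ∈ l, y ≠ t → y ∈ K) :
    ∀ c ∈ l, c ≠ t → (a ≠ t ∧ N.RIn K c a) ∨ (b ≠ t ∧ N.RIn K c b) := by
  induction d with
  | single v =>
      intro c hc hct
      rw [List.mem_singleton] at hc
      subst hc
      exact Or.inr ⟨hct, rin_refl (hsub c (List.mem_singleton_self _) hct)⟩
  | @cons p q w l hpq d ih =>
      intro c hc hct
      have hsub' : ∀ y ∈ l, y ≠ t → y ∈ K :=
        fun y hy hyt => hsub y (List.mem_cons_of_mem _ hy) hyt
      rcases List.mem_cons.mp hc with rfl | hc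
      · exact Or.inl ⟨hct, rin_refl (hsub c (List.mem_cons_self) hct)⟩
      · rcases ih hsub' c hc hct with ⟨hqt, hcq⟩ | ⟨hwt, hcw⟩
        · by_cases hpt : p = t
          · -- p = t, so t ∉ l and the rest of the path is intact
            subst hpt
            have hnl : ∀ y ∈ l, y ∈ K := fun y hy =>
              hsub' y hy (fun hyp => dp_not_mem_of_E hpq d (hyp ▸ hy))
            have hwt : w ≠ p := fun hwp => dp_not_mem_of_E hpq d (hwp ▸ dp_mem_right d)
            exact Or.inr ⟨hwt, (arc_all d hnl c hc).2⟩
          · refine Or.inl ⟨hpt, ?_⟩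
            have hqK : q ∈ K := hsub q (List.mem_cons_of_mem _ (dp_mem_left d)) hqt
            have hpK : p ∈ K := hsub p (List.mem_cons_self) hpt
            exact rin_trans hcq (rin_adj (adj_of_E hpq).symm hqK hpK)
        · exact Or.inr ⟨hwt, hcw⟩

lemma cycle_biconn {r u v h : N.V} {l₁ l₂ l₃ l₄ : List N.V}
    (d₁ : N.DP r u l₁) (d₂ : N.DP u h l₂) (d₃ : N.DP v h l₃) (d₄ : N.DP r v l₄)
    (hru : r ≠ u) (hrv : r ≠ v) (hrh : r ≠ h) (huv : u ≠ v) (huh : u ≠ h) (hvh : v ≠ h)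
    (I12 : ∀ y, y ∈ l₁ → y ∈ l₂ → y = u)
    (I13 : ∀ y, y ∈ l₁ → y ∈ l₃ → False)
    (I14 : ∀ y, y ∈ l₁ → y ∈ l₄ → y = r)
    (I23 : ∀ y, y ∈ l₂ → y ∈ l₃ → y = h)
    (I24 : ∀ y, y ∈ l₂ → y ∈ l₄ → False)
    (I34 : ∀ y, y ∈ l₃ → y ∈ l₄ → y = v) :
    N.IsBiconn {y | y ∈ l₁ ∨ y ∈ l₂ ∨ y ∈ l₃ ∨ y ∈ l₄} := by
  set S : Set N.V := {y | y ∈ l₁ ∨ y ∈ l₂ ∨ y ∈ l₃ ∨ y ∈ l₄} with hS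
  have hu1 : u ∈ l₁ := dp_mem_right d₁
  have hu2 : u ∈ l₂ := dp_mem_left d₂
  have hh2 : h ∈ l₂ := dp_mem_right d₂
  have hh3 : h ∈ l₃ := dp_mem_right d₃
  have hv3 : v ∈ l₃ := dp_mem_left d₃
  have hv4 : v ∈ l₄ := dp_mem_right d₄
  have hr1 : r ∈ l₁ := dp_mem_left d₁
  have hr4 : r ∈ l₄ := dp_mem_left d₄
  have hrS : r ∈ S := Or.inl hr1
  have huS : u ∈ S := Or.inl hu1
  have hvS : v ∈ S := Or.inr (Or.inr (Or.inl hv3))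
  have hhS : h ∈ S := Or.inr (Or.inl hh2)
  have master : ∀ (t : N.V) (K : Set N.V), (∀ y ∈ S, y ≠ t → y ∈ K) →
      ∀ a ∈ S, a ≠ t → ∀ b ∈ S, b ≠ t → N.RIn K a b := by
    intro t K hKt
    have m1 : ∀ y ∈ l₁, y ∈ S := fun y hy => Or.inl hy
    have m2 : ∀ y ∈ l₂, y ∈ S := fun y hy => Or.inr (Or.inl hy)
    have m3 : ∀ y ∈ l₃, y ∈ S := fun y hy => Or.inr (Or.inr (Or.inl hy))
    have m4 : ∀ y ∈ l₄, y ∈ S := fun y hy => Or.inr (Or.inr (Or.inr hy))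
    have e1 : t ∉ l₁ → N.RIn K r u := fun ht =>
      (arc_all d₁ (fun y hy => hKt y (m1 y hy) (fun hyt => ht (hyt ▸ hy))) r hr1).2
    have e2 : t ∉ l₂ → N.RIn K u h := fun ht =>
      (arc_all d₂ (fun y hy => hKt y (m2 y hy) (fun hyt => ht (hyt ▸ hy))) u hu2).2
    have e3 : t ∉ l₃ → N.RIn K v h := fun ht =>
      (arc_all d₃ (fun y hy => hKt y (m3 y hy) (fun hyt => ht (hyt ▸ hy))) v hv3).2
    have e4 : t ∉ l₄ → N.RIn K r v := fun ht =>
      (arc_all d₄ (fun y hy => hKt y (m4 y hy) (fun hyt => ht (hyt ▸ hy))) r hr4).2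
    obtain ⟨j₀, hj₀S, hj₀t, hubr, hubu, hubv, hubh⟩ :
        ∃ j₀, j₀ ∈ S ∧ j₀ ≠ t ∧ (r ≠ t → N.RIn K r j₀) ∧ (u ≠ t → N.RIn K u j₀) ∧
          (v ≠ t → N.RIn K v j₀) ∧ (h ≠ t → N.RIn K h j₀) := by
      by_cases htu : t = u
      · subst htu
        have h4 : t ∉ l₄ := fun hmem => hru (I14 t hu1 hmem).symm
        have h3 : t ∉ l₃ := fun hmem => huh (I23 t hu2 hmem)
        refine ⟨v, hvS, Ne.symm huv, fun _ => e4 h4, fun habs => absurd rfl habs,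
          fun hvt => rin_refl (hKt v hvS hvt), fun _ => rin_symm (e3 h3)⟩
      · by_cases htr : t = r
        · subst htr
          have h2 : t ∉ l₂ := fun hmem => hru (I12 t hr1 hmem)
          have h3 : t ∉ l₃ := fun hmem => hrv (I34 t hmem hr4)
          refine ⟨h, hhS, Ne.symm hrh, fun habs => absurd rfl habs, fun _ => e2 h2,
            fun _ => e3 h3, fun hht => rin_refl (hKt h hhS hht)⟩
        · by_cases htv : t = v
          · subst htv
            have h1 : t ∉ l₁ := fun hmem => hrv (I14 t hmem hv4).symm
            have h2 : t ∉ l₂ := fun hmem => hvh (I23 t hmem hv3)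
            refine ⟨u, huS, fun hh => htu hh.symm, fun _ => e1 h1, fun hut => rin_refl (hKt u huS hut),
              fun habs => absurd rfl habs, fun _ => rin_symm (e2 h2)⟩
          · by_cases hth : t = h
            · subst hth
              have h1 : t ∉ l₁ := fun hmem => huh (I12 t hmem hh2).symm
              have h4 : t ∉ l₄ := fun hmem => hvh (I34 t hh3 hmem).symm
              refine ⟨r, hrS, fun hh => htr hh.symm, fun hrt => rin_refl (hKt r hrS hrt),
                fun _ => rin_symm (e1 h1), fun _ => rin_symm (e4 h4), fun habs => absurd rfl habs⟩
            · -- t is not a junction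
              by_cases h1 : t ∈ l₁
              · have h2 : t ∉ l₂ := fun hmem => htu (I12 t h1 hmem)
                have h3 : t ∉ l₃ := fun hmem => I13 t h1 hmem
                have h4 : t ∉ l₄ := fun hmem => htr (I14 t h1 hmem)
                exact ⟨h, hhS, fun hh => hth hh.symm,
                  fun _ => rin_trans (e4 h4) (e3 h3), fun _ => e2 h2,
                  fun _ => e3 h3, fun hht => rin_refl (hKt h hhS hht)⟩
              · by_cases h2 : t ∈ l₂
                · have h3 : t ∉ l₃ := fun hmem => hth (I23 t h2 hmem)
                  have h4 : t ∉ l₄ := fun hmem => I24 t h2 hmem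
                  exact ⟨v, hvS, fun hh => htv hh.symm,
                    fun _ => e4 h4, fun _ => rin_trans (rin_symm (e1 h1)) (e4 h4),
                    fun hvt => rin_refl (hKt v hvS hvt), fun _ => rin_symm (e3 h3)⟩
                · by_cases h3 : t ∈ l₃
                  · have h4 : t ∉ l₄ := fun hmem => htv (I34 t h3 hmem)
                    exact ⟨u, huS, fun hh => htu hh.symm,
                      fun _ => e1 h1, fun hut => rin_refl (hKt u huS hut),
                      fun _ => rin_trans (rin_symm (e4 h4)) (e1 h1), fun _ => rin_symm (e2 h2)⟩
                  · exact ⟨h, hhS, fun hh => hth hh.symm,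
                      fun _ => rin_trans (e1 h1) (e2 h2), fun _ => e2 h2,
                      fun _ => e3 h3, fun hht => rin_refl (hKt h hhS hht)⟩
    have rj : ∀ c ∈ S, c ≠ t → N.RIn K c j₀ := by
      intro c hc hct
      rcases hc with hc | hc | hc | hc
      · rcases arc_split d₁ t (fun y hy hyt => hKt y (m1 y hy) hyt) c hc hct with
          ⟨hne, hrr⟩ | ⟨hne, hrr⟩
        · exact rin_trans hrr (hubr hne)
        · exact rin_trans hrr (hubu hne)
      · rcases arc_split d₂ t (fun y hy hyt => hKt y (m2 y hy) hyt) c hc hct with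
          ⟨hne, hrr⟩ | ⟨hne, hrr⟩
        · exact rin_trans hrr (hubu hne)
        · exact rin_trans hrr (hubh hne)
      · rcases arc_split d₃ t (fun y hy hyt => hKt y (m3 y hy) hyt) c hc hct with
          ⟨hne, hrr⟩ | ⟨hne, hrr⟩
        · exact rin_trans hrr (hubv hne)
        · exact rin_trans hrr (hubh hne)
      · rcases arc_split d₄ t (fun y hy hyt => hKt y (m4 y hy) hyt) c hc hct with
          ⟨hne, hrr⟩ | ⟨hne, hrr⟩
        · exact rin_trans hrr (hubr hne)
        · exact rin_trans hrr (hubv hne)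
    intro a ha hat b hb hbt
    exact rin_trans (rj a ha hat) (rin_symm (rj b hb hbt))
  constructor
  · rw [SimpleGraph.connected_iff]
    refine ⟨preconnected_iff_rin.mpr ?_, ⟨⟨u, huS⟩⟩⟩
    intro a ha b hb
    -- pick a junction different from a and b
    obtain ⟨t, hta, htb⟩ : ∃ t, t ≠ a ∧ t ≠ b := by
      by_cases h1 : r ≠ a ∧ r ≠ b
      · exact ⟨r, h1⟩
      · by_cases h2 : u ≠ a ∧ u ≠ b
        · exact ⟨u, h2⟩
        · by_cases h3 : v ≠ a ∧ v ≠ b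
          · exact ⟨v, h3⟩
          · exfalso
            push_neg at h1 h2 h3
            -- r, u, v are three distinct vertices, each equal to a or b: pigeonhole
            by_cases hra : r = a
            · by_cases hua : u = a
              · exact hru (hra.trans hua.symm)
              · have hub : u = b := by tauto
                by_cases hva : v = a
                · exact hrv (hra.trans hva.symm)
                · have hvb : v = b := by tauto
                  exact huv (hub.trans hvb.symm)
            · have hrb : r = b := by tauto
              by_cases hub : u = b
              · exact hru (hrb.trans hub.symm)
              · have hua : u = a := by tauto
                by_cases hvb : v = b
                · exact hrv (hrb.trans hvb.symm)
                · have hva : v = a := by tauto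
                  exact huv (hua.trans hva.symm)
    exact master t S (fun y hy _ => hy) a ha (fun hh => hta hh.symm) b hb (fun hh => htb hh.symm)
  · intro t htS
    apply preconnected_iff_rin.mpr
    intro a ha b hb
    exact master t (S \ {t}) (fun y hy hyt => ⟨hy, hyt⟩) a ha.1 ha.2 b hb.1 hb.2

/-! ### Forward direction: a level-1 network has a closed clustering system satisfying (L) -/

lemma ovl_not_reach {u v : N.V} (hovl : Overlap (N.cluster u) (N.cluster v)) :
    ¬ N.reach u v := by
  intro h
  exact hovl.2.2 (Set.inter_eq_right.mpr (cluster_mono h))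

lemma ovl_machine {u v : N.V} (hovl : Overlap (N.cluster u) (N.cluster v)) {x : X}
    (hxu : x ∈ N.cluster u) (hxv : x ∈ N.cluster v) :
    ∃ (S : Set N.V) (h : N.V), N.IsBiconn S ∧ u ∈ S ∧ v ∈ S ∧ h ∈ S ∧
      N.reach u h ∧ N.reach v h ∧ h ≠ u ∧ N.IsHybrid h ∧ x ∈ N.cluster h ∧
      (∃ r ∈ S, r ≠ u ∧ N.reach r u) ∧ (∃ p ∈ S, N.E p u) := by
  have hnuv : ¬ N.reach u v := ovl_not_reach hovl
  have hnvu : ¬ N.reach v u := by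
    intro hr
    exact hovl.2.1 (Set.inter_eq_left.mpr (cluster_mono hr))
  have huv : u ≠ v := fun h => hnuv (h ▸ ReflTransGen.refl)
  obtain ⟨r, hru, hrv, hmin⟩ := exists_min_anc N u v
  obtain ⟨l₁, d₁⟩ := dp_of_reach hru
  obtain ⟨l₄, d₄⟩ := dp_of_reach hrv
  obtain ⟨lP, dP⟩ := dp_of_reach (hxu : N.reach u (N.leafEmb x))
  obtain ⟨lQ, dQ⟩ := dp_of_reach (hxv : N.reach v (N.leafEmb x))
  set QS : Set N.V := {y | y ∈ lQ} with hQS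
  obtain ⟨h, l₂, d₂, hhQ, hfirst, hsubP⟩ := dp_first dP QS (dp_mem_right dQ)
  obtain ⟨l₃, d₃, hsubQ⟩ := dp_split_at dQ hhQ
  -- distinctness of junctions
  have hunotQ : u ∉ QS := fun hu => hnvu (dp_mem_reach dQ hu).1
  have huh : u ≠ h := fun he => hunotQ (he ▸ hhQ)
  have hvh : v ≠ h := fun he => hnuv (he ▸ dp_reach d₂)
  have hru' : r ≠ u := fun he => hnuv (he ▸ hrv)
  have hrv' : r ≠ v := fun he => hnvu (he ▸ hru)
  have hrh : r ≠ h := by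
    intro he
    rw [← he] at d₂
    exact hru' (reach_antisymm hru (dp_reach d₂))
  -- intersection properties
  have I12 : ∀ y, y ∈ l₁ → y ∈ l₂ → y = u := fun y hy₁ hy₂ =>
    reach_antisymm (dp_mem_reach d₁ hy₁).2 (dp_mem_reach d₂ hy₂).1
  have I13 : ∀ y, y ∈ l₁ → y ∈ l₃ → False := fun y hy₁ hy₃ =>
    hnvu (reach_trans (dp_mem_reach dQ (hsubQ y hy₃)).1 (dp_mem_reach d₁ hy₁).2)
  have I14 : ∀ y, y ∈ l₁ → y ∈ l₄ → y = r := fun y hy₁ hy₄ =>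
    hmin y (dp_mem_reach d₁ hy₁).1 (dp_mem_reach d₁ hy₁).2 (dp_mem_reach d₄ hy₄).2
  have I23 : ∀ y, y ∈ l₂ → y ∈ l₃ → y = h := by
    intro y hy₂ hy₃
    rcases hfirst y hy₂ with rfl | hy
    · rfl
    · exact absurd (hsubQ y hy₃) hy
  have I24 : ∀ y, y ∈ l₂ → y ∈ l₄ → False := fun y hy₂ hy₄ =>
    hnuv (reach_trans (dp_mem_reach d₂ hy₂).1 (dp_mem_reach d₄ hy₄).2)
  have I34 : ∀ y, y ∈ l₃ → y ∈ l₄ → y = v := fun y hy₃ hy₄ =>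
    reach_antisymm (dp_mem_reach d₄ hy₄).2 (dp_mem_reach d₃ hy₃).1
  have hbic := cycle_biconn d₁ d₂ d₃ d₄ hru' hrv' hrh huv huh hvh I12 I13 I14 I23 I24 I34
  set S : Set N.V := {y | y ∈ l₁ ∨ y ∈ l₂ ∨ y ∈ l₃ ∨ y ∈ l₄} with hS
  -- hybrid
  obtain ⟨p₂, hp₂mem, hp₂ne, hp₂E⟩ := dp_penult d₂ huh
  obtain ⟨p₃, hp₃mem, hp₃ne, hp₃E⟩ := dp_penult d₃ hvh
  have hp23 : p₂ ≠ p₃ := fun he => hp₂ne (I23 p₂ hp₂mem (he ▸ hp₃mem))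
  have hhyb : N.IsHybrid h := by
    rw [IsHybrid, inDeg, Set.one_lt_ncard (Set.toFinite _)]
    exact ⟨p₂, hp₂E, p₃, hp₃E, hp23⟩
  obtain ⟨pu, hpumem, hpune, hpuE⟩ := dp_penult d₁ hru'
  refine ⟨S, h, hbic, Or.inl (dp_mem_right d₁), Or.inr (Or.inr (Or.inl (dp_mem_left d₃))),
    Or.inr (Or.inl (dp_mem_right d₂)), dp_reach d₂, dp_reach d₃, Ne.symm huh, hhyb, ?_, ?_, ?_⟩
  · exact (dp_mem_reach dP (hsubP h (dp_mem_right d₂))).2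
  · exact ⟨r, Or.inl (dp_mem_left d₁), hru', hru⟩
  · exact ⟨pu, Or.inl hpumem, hpuE⟩

lemma ovl_not_hybrid (hlvl : N.Level1) {u v : N.V}
    (hovl : Overlap (N.cluster u) (N.cluster v)) : ¬ N.IsHybrid u := by
  intro hhyb
  obtain ⟨x₀, hx₀⟩ := hovl.1
  obtain ⟨S, h, hbic, huS, hvS, hhS, huh, hvhreach, hhu, hhyb', hxh, ⟨r, hrS, hrne, hrreach⟩, _⟩ :=
    ovl_machine hovl hx₀.1 hx₀.2
  obtain ⟨B, hB, hSB⟩ := exists_block hbic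
  have heq : u = h := by
    refine hlvl B hB ⟨hSB huS, hhyb, r, hSB hrS, hrne, hrreach⟩
      ⟨hSB hhS, hhyb', u, hSB huS, Ne.symm hhu, huh⟩
  rw [← heq] at hvhreach
  exact hovl.2.1 (Set.inter_eq_left.mpr (cluster_mono hvhreach))

lemma machines_agree (hlvl : N.Level1) {u : N.V}
    (hnh : ¬ N.IsHybrid u)
    {S S' : Set N.V} {h h' : N.V}
    (hbic : N.IsBiconn S) (hbic' : N.IsBiconn S')
    (huS : u ∈ S) (huS' : u ∈ S')
    (hhS : h ∈ S) (hhS' : h' ∈ S')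
    (hreach : N.reach u h) (hreach' : N.reach u h')
    (hne : h ≠ u) (hne' : h' ≠ u)
    (hhyb : N.IsHybrid h) (hhyb' : N.IsHybrid h')
    (hp : ∃ p ∈ S, N.E p u) (hp' : ∃ p ∈ S', N.E p u) : h = h' := by
  obtain ⟨p, hpS, hpE⟩ := hp
  obtain ⟨p', hpS', hpE'⟩ := hp'
  have hpp : p = p' := by
    have hle : ({w | N.E w u} : Set N.V).ncard ≤ 1 := by
      by_contra hcon
      exact hnh (lt_of_not_ge hcon)
    exact (Set.ncard_le_one (Set.toFinite _)).mp hle p hpE p' hpE'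
  subst hpp
  have hpu : p ≠ u := E_ne hpE
  have hunion := biconn_union hbic hbic' huS huS' hpS hpS' (Ne.symm hpu)
  obtain ⟨B, hB, hSB⟩ := exists_block hunion
  exact hlvl B hB
    ⟨hSB (Or.inl hhS), hhyb, u, hSB (Or.inl huS), Ne.symm hne, hreach⟩
    ⟨hSB (Or.inr hhS'), hhyb', u, hSB (Or.inr huS'), Ne.symm hne', hreach'⟩

lemma forward_core (hlvl : N.Level1) {u v : N.V}
    (hovl : Overlap (N.cluster u) (N.cluster v)) :
    ∃ h₀ : N.V, ∀ w : N.V, Overlap (N.cluster u) (N.cluster w) →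
      N.cluster u ∩ N.cluster w = N.cluster h₀ := by
  have hnh : ¬ N.IsHybrid u := ovl_not_hybrid hlvl hovl
  obtain ⟨x₀, hx₀⟩ := hovl.1
  obtain ⟨S₀, h₀, hbic₀, huS₀, _, hhS₀, hreach₀, _, hne₀, hhyb₀, _, _, hp₀⟩ :=
    ovl_machine hovl hx₀.1 hx₀.2
  refine ⟨h₀, ?_⟩
  intro w hovlw
  obtain ⟨y₀, hy₀⟩ := hovlw.1
  obtain ⟨S₁, h₁, hbic₁, huS₁, _, hhS₁, hreach₁u, hreach₁w, hne₁, hhyb₁, _, _, hp₁⟩ :=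
    ovl_machine hovlw hy₀.1 hy₀.2
  have h10 : h₁ = h₀ := machines_agree hlvl hnh hbic₁ hbic₀ huS₁ huS₀ hhS₁ hhS₀
    hreach₁u hreach₀ hne₁ hne₀ hhyb₁ hhyb₀ hp₁ hp₀
  apply Set.Subset.antisymm
  · intro y hy
    obtain ⟨S₂, h₂, hbic₂, huS₂, _, hhS₂, hreach₂u, hreach₂w, hne₂, hhyb₂, hyh₂, _, hp₂⟩ :=
      ovl_machine hovlw hy.1 hy.2
    have h20 : h₂ = h₀ := machines_agree hlvl hnh hbic₂ hbic₀ huS₂ huS₀ hhS₂ hhS₀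
      hreach₂u hreach₀ hne₂ hne₀ hhyb₂ hhyb₀ hp₂ hp₀
    exact h20 ▸ hyh₂
  · intro y hy
    rw [← h10] at hy
    exact ⟨cluster_mono hreach₁u hy, cluster_mono hreach₁w hy⟩

lemma forward_closed (hlvl : N.Level1) : IsClosedCS N.CS := by
  rintro A ⟨u, rfl⟩ B ⟨v, rfl⟩ hne
  by_cases hAB : N.cluster u ⊆ N.cluster v
  · rw [Set.inter_eq_left.mpr hAB]; exact ⟨u, rfl⟩
  · by_cases hBA : N.cluster v ⊆ N.cluster u
    · rw [Set.inter_eq_right.mpr hBA]; exact ⟨v, rfl⟩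
    · have hovl : Overlap (N.cluster u) (N.cluster v) :=
        ⟨hne, fun h => hAB (Set.inter_eq_left.mp h), fun h => hBA (Set.inter_eq_right.mp h)⟩
      obtain ⟨h₀, hh₀⟩ := forward_core hlvl hovl
      rw [hh₀ v hovl]
      exact ⟨h₀, rfl⟩

lemma forward_L (hlvl : N.Level1) : PropertyL N.CS := by
  rintro C₁ ⟨u, rfl⟩ C₂ ⟨v, rfl⟩ C₃ ⟨w, rfl⟩ h12 h13
  obtain ⟨h₀, hh₀⟩ := forward_core hlvl h12
  rw [hh₀ v h12, hh₀ w h13]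

end Network

end Aux

section Aux2
/-! ### Set combinatorics for closed clustering systems with property (L) -/

section SetComb

variable {X : Type} {𝒞 : Set (Set X)}

lemma cs_nonempty (h𝒞 : IsClusteringSystem 𝒞) {A : Set X} (hA : A ∈ 𝒞) : A.Nonempty := by
  rcases Set.eq_empty_or_nonempty A with rfl | h
  · exact absurd hA h𝒞.1
  · exact h

lemma ovl_swap {A B : Set X} (h : Overlap A B) : Overlap B A := by
  refine ⟨Set.inter_comm B A ▸ h.1, ?_, ?_⟩
  · rw [Set.inter_comm]; exact h.2.2
  · rw [Set.inter_comm]; exact h.2.1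

lemma ovl_of_incomp {A B : Set X} (h : (A ∩ B).Nonempty) (h1 : ¬ A ⊆ B) (h2 : ¬ B ⊆ A) :
    Overlap A B :=
  ⟨h, fun he => h1 (he ▸ Set.inter_subset_right), fun he => h2 (he ▸ Set.inter_subset_left)⟩

/-- `A` covers `B` within `𝒞` -/
def Cov (𝒞 : Set (Set X)) (A B : Set X) : Prop :=
  B ⊂ A ∧ ¬ ∃ C ∈ 𝒞, B ⊂ C ∧ C ⊂ A

/-- `M` is a member of the overlap component of the hybrid cluster `z` -/
def MemO (𝒞 : Set (Set X)) (z M : Set X) : Prop :=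
  M ∈ 𝒞 ∧ ∃ M' ∈ 𝒞, Overlap M M' ∧ M ∩ M' = z

lemma memO_nonempty {z M : Set X} (h : MemO 𝒞 z M) : z.Nonempty := by
  obtain ⟨hM, M', hM', hovl, hint⟩ := h
  exact hint ▸ hovl.1

lemma memO_ssub {z M : Set X} (h : MemO 𝒞 z M) : z ⊂ M := by
  obtain ⟨hM, M', hM', hovl, hint⟩ := h
  exact Set.ssubset_iff_subset_ne.mpr ⟨hint ▸ Set.inter_subset_left,
    fun he => hovl.2.1 (hint.trans he)⟩

lemma memO_partner {z M : Set X} (h : MemO 𝒞 z M) :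
    ∃ M', MemO 𝒞 z M' ∧ Overlap M M' ∧ M ∩ M' = z := by
  obtain ⟨hM, M', hM', hovl, hint⟩ := h
  exact ⟨M', ⟨hM', M, hM, ovl_swap hovl, (Set.inter_comm M' M).trans hint⟩, hovl, hint⟩

/-- two distinct covers of the same cluster intersect in exactly that cluster, and overlap -/
lemma covers_inter (h𝒞 : IsClusteringSystem 𝒞) (hcl : IsClosedCS 𝒞) {z p q : Set X}
    (hz : z ∈ 𝒞) (hp : p ∈ 𝒞) (hq : q ∈ 𝒞)
    (hcp : Cov 𝒞 p z) (hcq : Cov 𝒞 q z) (hpq : p ≠ q) : p ∩ q = z ∧ Overlap p q := by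
  have hzp : z ⊂ p := hcp.1
  have hzq : z ⊂ q := hcq.1
  have hsub : z ⊆ p ∩ q := Set.subset_inter hzp.1 hzq.1
  have hne : (p ∩ q).Nonempty := (cs_nonempty h𝒞 hz).mono hsub
  have hmem : p ∩ q ∈ 𝒞 := hcl p hp q hq hne
  have hnotp : p ∩ q ≠ p := by
    intro he
    have hpsq : p ⊆ q := he ▸ Set.inter_subset_right
    exact hcq.2 ⟨p, hp, hzp, Set.ssubset_iff_subset_ne.mpr ⟨hpsq, hpq⟩⟩
  have hnotq : p ∩ q ≠ q := by
    intro he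
    have hqsp : q ⊆ p := he ▸ Set.inter_subset_left
    exact hcp.2 ⟨q, hq, hzq, Set.ssubset_iff_subset_ne.mpr ⟨hqsp, Ne.symm hpq⟩⟩
  have heq : p ∩ q = z := by
    by_contra hne'
    exact hcp.2 ⟨p ∩ q, hmem, Set.ssubset_iff_subset_ne.mpr ⟨hsub, Ne.symm hne'⟩,
      Set.ssubset_iff_subset_ne.mpr ⟨Set.inter_subset_left, hnotp⟩⟩
  exact ⟨heq, hne, hnotp, hnotq⟩

/-- a cluster that is the intersection of an overlapping pair overlaps nothing -/
lemma hyb_no_ovl (hL : PropertyL 𝒞) {z p q : Set X}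
    (hp : p ∈ 𝒞) (hq : q ∈ 𝒞) (hovl : Overlap p q) (hzpq : p ∩ q = z) :
    ∀ w ∈ 𝒞, ¬ Overlap z w := by
  intro w hw hzw
  have hzsp : z ⊆ p := hzpq ▸ Set.inter_subset_left
  have hzsq : z ⊆ q := hzpq ▸ Set.inter_subset_right
  have hnz : (z ∩ w).Nonempty := hzw.1
  by_cases hwp : w ⊆ p
  · by_cases hwq : w ⊆ q
    · have : w ⊆ z := hzpq ▸ Set.subset_inter hwp hwq
      exact hzw.2.2 (Set.inter_eq_right.mpr this)
    · by_cases hqw : q ⊆ w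
      · exact hovl.2.2 (Set.inter_eq_right.mpr (hqw.trans hwp))
      · have hovlqw : Overlap q w := by
          refine ovl_of_incomp ?_ hqw hwq
          exact hnz.mono (Set.inter_subset_inter hzsq Set.Subset.rfl)
        have hqpw := hL q hq p hp w hw (ovl_swap hovl) hovlqw
        have hzw' : z ⊆ w := by
          have : z = q ∩ w := by rw [← hqpw, Set.inter_comm q p, hzpq]
          rw [this]; exact Set.inter_subset_right
        exact hzw.2.1 (Set.inter_eq_left.mpr hzw')
  · by_cases hpw : p ⊆ w
    · exact hzw.2.1 (Set.inter_eq_left.mpr (hzsp.trans hpw))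
    · have hovlpw : Overlap p w := by
        refine ovl_of_incomp ?_ hpw hwp
        exact hnz.mono (Set.inter_subset_inter hzsp Set.Subset.rfl)
      have hpqw := hL p hp q hq w hw hovl hovlpw
      have hzw' : z ⊆ w := by
        have : z = p ∩ w := by rw [← hpqw, hzpq]
        rw [this]; exact Set.inter_subset_right
      exact hzw.2.1 (Set.inter_eq_left.mpr hzw')

lemma between_member (hL : PropertyL 𝒞) {z b M : Set X} (hb : b ∈ 𝒞)
    (hM : MemO 𝒞 z M) (h1 : z ⊂ b) (h2 : b ⊂ M) : MemO 𝒞 z b := by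
  obtain ⟨hM𝒞, M', hM', hovl, hint⟩ := hM
  have hzne : z.Nonempty := hint ▸ hovl.1
  have hzM' : z ⊆ M' := hint ▸ Set.inter_subset_right
  have hbM' : (b ∩ M').Nonempty := hzne.mono (Set.subset_inter h1.1 hzM')
  by_cases hbsub : b ⊆ M'
  · have : b ⊆ z := hint ▸ Set.subset_inter h2.1 hbsub
    exact absurd this h1.not_subset
  · by_cases hM'b : M' ⊆ b
    · have hMM' : M ∩ M' = M' := Set.inter_eq_right.mpr (hM'b.trans h2.1)
      exact absurd hMM' hovl.2.2
    · have hovlM'b : Overlap M' b :=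
        ovl_of_incomp (Set.inter_comm b M' ▸ hbM') hM'b hbsub
      have hLL := hL M' hM' M hM𝒞 b hb (ovl_swap hovl) hovlM'b
      have hbint : b ∩ M' = z := by
        rw [Set.inter_comm, ← hLL, Set.inter_comm]
        exact hint
      exact ⟨hb, M', hM', ovl_swap hovlM'b, hbint⟩

lemma club (hL : PropertyL 𝒞) {z E : Set X} (hE : E ∈ 𝒞) (hzE : z ⊂ E)
    (hnm : ¬ MemO 𝒞 z E) : ∀ M, MemO 𝒞 z M → M ⊆ E := by
  intro M hM
  by_cases hME : M ⊆ E
  · exact hME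
  by_cases hEM : E ⊆ M
  · exfalso
    have hEMs : E ⊂ M := Set.ssubset_iff_subset_ne.mpr ⟨hEM, fun he => hnm (he ▸ hM)⟩
    exact hnm (between_member hL hE hM hzE hEMs)
  · exfalso
    have hzne : z.Nonempty := memO_nonempty hM
    have hMEne : (M ∩ E).Nonempty := hzne.mono (Set.subset_inter (memO_ssub hM).1 hzE.1)
    have hovlME : Overlap M E := ovl_of_incomp hMEne hME hEM
    obtain ⟨hM𝒞, M', hM', hovl, hint⟩ := hM
    have := hL M hM𝒞 M' hM' E hE hovl hovlME
    have hEint : E ∩ M = z := by rw [Set.inter_comm, ← this, hint]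
    exact hnm ⟨hE, M, hM𝒞, ovl_swap hovlME, hEint⟩

lemma member_unique (hL : PropertyL 𝒞) {z z' M : Set X}
    (h : MemO 𝒞 z M) (h' : MemO 𝒞 z' M) : z = z' := by
  obtain ⟨hM, M₁, hM₁, hovl₁, hint₁⟩ := h
  obtain ⟨_, M₂, hM₂, hovl₂, hint₂⟩ := h'
  rw [← hint₁, ← hint₂]
  exact hL M hM M₁ hM₁ M₂ hM₂ hovl₁ hovl₂

section WithFin
variable [Finite X]

lemma exists_T (h𝒞 : IsClusteringSystem 𝒞) (hcl : IsClosedCS 𝒞) {z M₀ : Set X}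
    (hM₀ : MemO 𝒞 z M₀) :
    ∃ T, T ∈ 𝒞 ∧ (∀ M, MemO 𝒞 z M → M ⊆ T) ∧
      (∀ C ∈ 𝒞, (∀ M, MemO 𝒞 z M → M ⊆ C) → T ⊆ C) := by
  set F : Set (Set X) := {C | C ∈ 𝒞 ∧ ∀ M, MemO 𝒞 z M → M ⊆ C} with hF
  have hFne : F.Nonempty := ⟨Set.univ, h𝒞.2.1, fun M _ => Set.subset_univ M⟩
  obtain ⟨T, hTF, hTmin⟩ := Set.Finite.exists_minimalFor id F (Set.toFinite F) hFne
  refine ⟨T, hTF.1, hTF.2, ?_⟩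
  intro C hC hCF
  have hM₀ne : M₀.Nonempty := (memO_nonempty hM₀).mono (memO_ssub hM₀).1
  have hTCne : (T ∩ C).Nonempty := hM₀ne.mono (Set.subset_inter (hTF.2 M₀ hM₀) (hCF M₀ hM₀))
  have hTC : T ∩ C ∈ F :=
    ⟨hcl T hTF.1 C hC hTCne, fun M hM => Set.subset_inter (hTF.2 M hM) (hCF M hM)⟩
  have h2 : T = T ∩ C := Set.Subset.antisymm (@hTmin (T ∩ C) hTC Set.inter_subset_left) Set.inter_subset_left
  rw [h2]
  exact Set.inter_subset_right

lemma member_ssub_T {z M T : Set X}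
    (hM : MemO 𝒞 z M) (hT : ∀ M', MemO 𝒞 z M' → M' ⊆ T) : M ⊂ T := by
  refine Set.ssubset_iff_subset_ne.mpr ⟨hT M hM, ?_⟩
  intro he
  obtain ⟨M', hM', hovl, hint⟩ := memO_partner hM
  have : M ∩ M' = M' := Set.inter_eq_right.mpr (he ▸ hT M' hM')
  exact hovl.2.2 this

/-- the key structural cut: every Hasse edge leaving the region below the members of the
overlap component of `z` ends at the top vertex `T`. -/
lemma region_edge (hL : PropertyL 𝒞) {z T : Set X} (hT𝒞 : T ∈ 𝒞)
    (hTub : ∀ M, MemO 𝒞 z M → M ⊆ T)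
    (hTmin : ∀ C ∈ 𝒞, (∀ M, MemO 𝒞 z M → M ⊆ C) → T ⊆ C)
    {a b : Set X} (ha : a ∈ 𝒞) (hb : b ∈ 𝒞) (hane : a.Nonempty)
    (hedge : Cov 𝒞 a b ∨ Cov 𝒞 b a)
    (haΩ : ∃ M, MemO 𝒞 z M ∧ a ⊆ M) (hbΩ : ¬ ∃ M, MemO 𝒞 z M ∧ b ⊆ M) : b = T := by
  obtain ⟨M, hM, haM⟩ := haΩ
  rcases hedge with hcov | hcov
  · -- a covers b : b ⊂ a ⊆ M, contradiction
    exact absurd ⟨M, hM, hcov.1.1.trans haM⟩ hbΩ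
  · -- b covers a
    have hbMne : (b ∩ M).Nonempty := hane.mono (Set.subset_inter hcov.1.1 haM)
    by_cases hbM : b ⊆ M
    · exact absurd ⟨M, hM, hbM⟩ hbΩ
    by_cases hMb : M ⊆ b
    · have hMbs : M ⊂ b :=
        Set.ssubset_iff_subset_ne.mpr ⟨hMb, fun he => hbM (he ▸ Set.Subset.rfl)⟩
      have hmemb : ¬ MemO 𝒞 z b := fun hmb => hbΩ ⟨b, hmb, Set.Subset.rfl⟩
      have hzb : z ⊂ b := (memO_ssub hM).trans hMbs
      have hclub : ∀ M', MemO 𝒞 z M' → M' ⊆ b := club hL hb hzb hmemb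
      have hTb : T ⊆ b := hTmin b hb hclub
      have haT : a ⊂ T :=
        Set.ssubset_of_subset_of_ssubset haM (member_ssub_T hM hTub)
      by_contra hbT
      exact hcov.2 ⟨T, hT𝒞, haT, Set.ssubset_iff_subset_ne.mpr ⟨hTb, fun he => hbT he.symm⟩⟩
    · -- b overlaps M
      have hovlMb : Overlap M b :=
        ovl_of_incomp (Set.inter_comm b M ▸ hbMne) hMb hbM
      obtain ⟨M', hM', hovl, hint⟩ := memO_partner hM
      have := hL M hM.1 M' hM'.1 b hb hovl hovlMb
      have hbz : b ∩ M = z := by rw [Set.inter_comm, ← this, hint]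
      exact absurd ⟨b, ⟨hb, M, hM.1, ovl_swap hovlMb, hbz⟩, Set.Subset.rfl⟩ hbΩ

end WithFin

lemma master_edge {C : Set X} (hC : C ∈ 𝒞) (hno : ∀ w ∈ 𝒞, ¬ Overlap C w)
    {a b : Set X} (ha : a ∈ 𝒞) (hb : b ∈ 𝒞) (hane : a.Nonempty)
    (hedge : Cov 𝒞 a b ∨ Cov 𝒞 b a) (haC : a ⊂ C) : b ⊆ C := by
  rcases hedge with hcov | hcov
  · exact hcov.1.1.trans haC.1
  · by_cases hbC : b ⊆ C
    · exact hbC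
    by_cases hCb : C ⊆ b
    · exfalso
      have hCbs : C ⊂ b := Set.ssubset_iff_subset_ne.mpr ⟨hCb, fun he => hbC (he ▸ Set.Subset.rfl)⟩
      exact hcov.2 ⟨C, hC, haC, hCbs⟩
    · exfalso
      have hCbne : (C ∩ b).Nonempty := hane.mono (Set.subset_inter haC.1 hcov.1.1)
      exact hno b hb (ovl_of_incomp hCbne hCb hbC)

end SetComb

/-! ### The Hasse diagram network of a clustering system -/

section Hasse

variable {X : Type} [Fintype X]

/-- vertices: the clusters themselves -/
abbrev HV (𝒞 : Set (Set X)) : Type := {C : Set X // C ∈ 𝒞}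

/-- edges: covering relation -/
def HE (𝒞 : Set (Set X)) (A B : HV 𝒞) : Prop := Cov 𝒞 A.1 B.1

lemma hrtg_sub {𝒞 : Set (Set X)} {A B : HV 𝒞}
    (h : Relation.ReflTransGen (HE 𝒞) A B) : B.1 ⊆ A.1 := by
  induction h with
  | refl => exact Set.Subset.rfl
  | tail h' e ih => exact e.1.1.trans ih

lemma exists_cov_step {𝒞 : Set (Set X)} {A B : Set X}
    (hA : A ∈ 𝒞) (hB : B ∈ 𝒞) (hBA : B ⊂ A) : ∃ D ∈ 𝒞, B ⊆ D ∧ Cov 𝒞 A D := by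
  have hne : ({D | D ∈ 𝒞 ∧ B ⊆ D ∧ D ⊂ A} : Set (Set X)).Nonempty :=
    ⟨B, hB, Set.Subset.rfl, hBA⟩
  obtain ⟨D, hD, hDmax⟩ := Set.Finite.exists_maximalFor id _ (Set.toFinite _) hne
  refine ⟨D, hD.1, hD.2.1, hD.2.2, ?_⟩
  rintro ⟨C, hC, hDC, hCA⟩
  exact hDC.not_subset (@hDmax C ⟨hC, hD.2.1.trans hDC.1, hCA⟩ hDC.1)

lemma exists_cov_up {𝒞 : Set (Set X)} (huniv : Set.univ ∈ 𝒞) {A : Set X}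
    (hA : A ∈ 𝒞) (hAne : A ≠ Set.univ) : ∃ D ∈ 𝒞, Cov 𝒞 D A := by
  have hne : ({D | D ∈ 𝒞 ∧ A ⊂ D} : Set (Set X)).Nonempty :=
    ⟨Set.univ, huniv, Set.ssubset_iff_subset_ne.mpr ⟨Set.subset_univ A, hAne⟩⟩
  obtain ⟨D, hD, hDmin⟩ := Set.Finite.exists_minimalFor id _ (Set.toFinite _) hne
  refine ⟨D, hD.1, hD.2, ?_⟩
  rintro ⟨C, hC, hAC, hCD⟩
  exact hCD.not_subset (@hDmin C ⟨hC, hAC⟩ hCD.1)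

lemma hsub_rtg {𝒞 : Set (Set X)} (h𝒞 : IsClusteringSystem 𝒞) :
    ∀ (n : ℕ) (A B : HV 𝒞), A.1.ncard ≤ n → B.1 ⊆ A.1 →
      Relation.ReflTransGen (HE 𝒞) A B := by
  intro n
  induction n with
  | zero =>
      intro A B hn hBA
      exfalso
      have : A.1 = ∅ := (Set.ncard_eq_zero (Set.toFinite _)).mp (Nat.le_zero.mp hn)
      exact absurd (this ▸ A.2) h𝒞.1
  | succ n ih =>
      intro A B hn hBA
      by_cases heq : A = B
      · exact heq ▸ Relation.ReflTransGen.refl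
      · have hBAs : B.1 ⊂ A.1 :=
          Set.ssubset_iff_subset_ne.mpr ⟨hBA, fun he => heq (Subtype.ext he.symm)⟩
        obtain ⟨D, hD, hBD, hcov⟩ := exists_cov_step A.2 B.2 hBAs
        have hcard : D.ncard ≤ n := by
          have := Set.ncard_lt_ncard hcov.1 (Set.toFinite _)
          omega
        refine Relation.ReflTransGen.head ?_ (ih ⟨D, hD⟩ B hcard hBD)
        exact hcov

/-- The Hasse-diagram network of a clustering system. -/
noncomputable def Hasse (𝒞 : Set (Set X)) (h𝒞 : IsClusteringSystem 𝒞) : Network X where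
  V := HV 𝒞
  fintypeV := Fintype.ofFinite _
  E := HE 𝒞
  leafEmb x := ⟨{x}, h𝒞.2.2 x⟩
  leafEmb_inj := by
    intro x y h
    have : ({x} : Set X) = {y} := congrArg Subtype.val h
    simpa using this
  acyclic := by
    intro u v h hr
    exact h.1.not_subset (hrtg_sub hr)
  root_unique := by
    refine ⟨⟨Set.univ, h𝒞.2.1⟩, ?_, ?_⟩
    · intro u h
      exact h.1.not_subset (Set.subset_univ u.1)
    · intro y hy
      by_contra hne
      have hyne : y.1 ≠ Set.univ := fun he => hne (Subtype.ext he)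
      obtain ⟨D, hD, hcov⟩ := exists_cov_up h𝒞.2.1 y.2 hyne
      exact hy ⟨D, hD⟩ hcov
  leaf_iff := by
    intro v
    constructor
    · intro hv
      obtain ⟨a, ha⟩ := cs_nonempty h𝒞 v.2
      refine ⟨a, ?_⟩
      by_contra hne
      have hsv : {a} ⊂ v.1 := by
        refine Set.ssubset_iff_subset_ne.mpr ⟨Set.singleton_subset_iff.mpr ha, ?_⟩
        intro he
        exact hne (Subtype.ext he)
      obtain ⟨D, hD, _, hcov⟩ := exists_cov_step v.2 (h𝒞.2.2 a) hsv
      exact hv ⟨D, hD⟩ hcov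
    · rintro ⟨x, rfl⟩ w hw
      have : w.1 ⊂ {x} := hw.1
      rw [Set.ssubset_singleton_iff] at this
      exact absurd ((this ▸ w.2) : (∅ : Set X) ∈ 𝒞) h𝒞.1

variable {𝒞 : Set (Set X)} (h𝒞 : IsClusteringSystem 𝒞)

lemma hasse_reach_iff {A B : (Hasse 𝒞 h𝒞).V} :
    (Hasse 𝒞 h𝒞).reach A B ↔ B.1 ⊆ A.1 := by
  constructor
  · exact fun h => hrtg_sub h
  · exact fun h => hsub_rtg h𝒞 A.1.ncard A B le_rfl h

lemma hasse_cluster (A : (Hasse 𝒞 h𝒞).V) : (Hasse 𝒞 h𝒞).cluster A = A.1 := by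
  ext x
  rw [Network.cluster, Set.mem_setOf_eq, hasse_reach_iff h𝒞]
  simp [Hasse]

lemma hasse_CS : (Hasse 𝒞 h𝒞).CS = 𝒞 := by
  ext C
  constructor
  · rintro ⟨A, rfl⟩
    rw [hasse_cluster h𝒞]
    exact A.2
  · intro hC
    exact ⟨⟨C, hC⟩, hasse_cluster h𝒞 _⟩

end Hasse

/-! ### The Hasse network of a closed system with (L) is level-1 -/

section Level1

open Network

variable {X : Type} [Fintype X] {𝒞 : Set (Set X)}

lemma tsub_step (h𝒞 : IsClusteringSystem 𝒞) (hcl : IsClosedCS 𝒞) (hL : PropertyL 𝒞)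
    {B : Set (Hasse 𝒞 h𝒞).V} (hbic : (Hasse 𝒞 h𝒞).IsBiconn B)
    {z w : (Hasse 𝒞 h𝒞).V} (hzB : z ∈ B) (hne : z ≠ w)
    {Pz : Set X} (hPz : MemO 𝒞 z.1 Pz)
    {Tz : Set X} (hTz𝒞 : Tz ∈ 𝒞) (hTzub : ∀ M, MemO 𝒞 z.1 M → M ⊆ Tz)
    (hTzmin : ∀ C ∈ 𝒞, (∀ M, MemO 𝒞 z.1 M → M ⊆ C) → Tz ⊆ C)
    {Tw : Set X} (hTwmin : ∀ C ∈ 𝒞, (∀ M, MemO 𝒞 w.1 M → M ⊆ C) → Tw ⊆ C)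
    {Q₁ Q₂ : (Hasse 𝒞 h𝒞).V} (hQ₁B : Q₁ ∈ B) (hQ₂B : Q₂ ∈ B) (hQ12 : Q₁ ≠ Q₂)
    (hc₁ : Cov 𝒞 Q₁.1 w.1) (hc₂ : Cov 𝒞 Q₂.1 w.1) :
    Tw ⊂ Tz := by
  let N := Hasse 𝒞 h𝒞
  let Tv : N.V := ⟨Tz, hTz𝒞⟩
  let Ω : Set N.V := {y | ∃ M, MemO 𝒞 z.1 M ∧ y.1 ⊆ M}
  have hgS : Tv ∉ Ω := by
    rintro ⟨M, hM, hTM⟩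
    exact (member_ssub_T hM hTzub).not_subset hTM
  have hedge : ∀ a b : N.V, N.UG.Adj a b → a ∈ Ω → b ∉ Ω → b = Tv := by
    intro a b hadj ha hb
    have hedge' : Cov 𝒞 a.1 b.1 ∨ Cov 𝒞 b.1 a.1 := hadj.2
    exact Subtype.ext (region_edge hL hTz𝒞 hTzub hTzmin a.2 b.2
      (cs_nonempty h𝒞 a.2) hedge' ha hb)
  have hzΩ : z ∈ Ω := ⟨Pz, hPz, (memO_ssub hPz).1⟩
  obtain ⟨Q, hQB, hQcov, hQTv⟩ : ∃ Q, Q ∈ B ∧ Cov 𝒞 Q.1 w.1 ∧ Q ≠ Tv := by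
    by_cases h1 : Q₁ = Tv
    · exact ⟨Q₂, hQ₂B, hc₂, fun he => hQ12 (h1.trans he.symm)⟩
    · exact ⟨Q₁, hQ₁B, hc₁, h1⟩
  have hQΩ : Q ∈ Ω := by
    by_contra hcon
    exact biconn_cut hbic Tv Ω hgS hedge hzB hzΩ hQB hcon hQTv
  obtain ⟨M, hM, hQM⟩ := hQΩ
  have hwM : w.1 ⊂ M := by
    refine Set.ssubset_iff_subset_ne.mpr ⟨hQcov.1.1.trans hQM, ?_⟩
    intro he
    rw [← he] at hQM
    exact hQcov.1.not_subset hQM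
  have hMnot : ¬ MemO 𝒞 w.1 M := fun hm => hne (Subtype.ext (member_unique hL hM hm))
  have hclubM : ∀ M', MemO 𝒞 w.1 M' → M' ⊆ M := club hL hM.1 hwM hMnot
  have hTwM : Tw ⊆ M := hTwmin M hM.1 hclubM
  have hMT : M ⊂ Tz := member_ssub_T hM hTzub
  refine Set.ssubset_iff_subset_ne.mpr ⟨hTwM.trans hMT.1, ?_⟩
  intro he
  rw [← he] at hMT
  exact hMT.not_subset hTwM

lemma hasse_level1 (h𝒞 : IsClusteringSystem 𝒞) (hcl : IsClosedCS 𝒞) (hL : PropertyL 𝒞) :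
    (Hasse 𝒞 h𝒞).Level1 := by
  intro B hblock
  intro z₁ hz₁ z₂ hz₂
  by_contra hne
  let N := Hasse 𝒞 h𝒞
  obtain ⟨hz₁B, hz₁hyb, u₁, hu₁B, hu₁ne, hu₁r⟩ := hz₁
  obtain ⟨hz₂B, hz₂hyb, u₂, hu₂B, hu₂ne, hu₂r⟩ := hz₂
  have hbic := hblock.1
  have hne' : z₁.1 ≠ z₂.1 := fun he => hne (Subtype.ext he)
  have hyb_data : ∀ z : N.V, N.IsHybrid z →
      (∀ c ∈ 𝒞, ¬ Overlap z.1 c) ∧ ∃ P, MemO 𝒞 z.1 P := by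
    intro z hz
    rw [Network.IsHybrid, Network.inDeg, Set.one_lt_ncard (Set.toFinite _)] at hz
    obtain ⟨p, hp, q, hq, hpq⟩ := hz
    have hpq' : p.1 ≠ q.1 := fun he => hpq (Subtype.ext he)
    have hpc : Cov 𝒞 p.1 z.1 := hp
    have hqc : Cov 𝒞 q.1 z.1 := hq
    obtain ⟨hint, hovl⟩ := covers_inter h𝒞 hcl z.2 p.2 q.2 hpc hqc hpq'
    exact ⟨hyb_no_ovl hL p.2 q.2 hovl hint, p.1, p.2, q.1, q.2, hovl, hint⟩
  obtain ⟨hnoovl₁, P₁m, hP₁m⟩ := hyb_data z₁ hz₁hyb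
  obtain ⟨hnoovl₂, P₂m, hP₂m⟩ := hyb_data z₂ hz₂hyb
  have hno_below : ∀ (z u : N.V), z ∈ B → u ∈ B → u ≠ z → N.reach u z →
      (∀ c ∈ 𝒞, ¬ Overlap z.1 c) → ∀ c ∈ B, ¬ c.1 ⊂ z.1 := by
    intro z u hzB huB hune hur hno c hc hcs
    have husub : z.1 ⊆ u.1 := hrtg_sub hur
    refine biconn_cut hbic z {w : N.V | w.1 ⊂ z.1}
      (fun hss => absurd rfl (Set.ssubset_iff_subset_ne.mp hss).2) ?_ hc hcs huB
      (by exact fun hss => hss.not_subset husub) hune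
    intro a b hadj ha hb
    have hedge' : Cov 𝒞 a.1 b.1 ∨ Cov 𝒞 b.1 a.1 := hadj.2
    have hbz : b.1 ⊆ z.1 := master_edge z.2 hno a.2 b.2 (cs_nonempty h𝒞 a.2) hedge' ha
    refine Subtype.ext ?_
    by_contra hbe
    exact hb (Set.ssubset_iff_subset_ne.mpr ⟨hbz, hbe⟩)
  have hnb₁ := hno_below z₁ u₁ hz₁B hu₁B hu₁ne hu₁r hnoovl₁
  have hnb₂ := hno_below z₂ u₂ hz₂B hu₂B hu₂ne hu₂r hnoovl₂
  have hdisj : z₁.1 ∩ z₂.1 = ∅ := by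
    by_contra hcon
    have hnonempty : (z₁.1 ∩ z₂.1).Nonempty := Set.nonempty_iff_ne_empty.mpr hcon
    by_cases h12 : z₁.1 ⊆ z₂.1
    · exact hnb₂ z₁ hz₁B (Set.ssubset_iff_subset_ne.mpr ⟨h12, hne'⟩)
    by_cases h21 : z₂.1 ⊆ z₁.1
    · exact hnb₁ z₂ hz₂B (Set.ssubset_iff_subset_ne.mpr ⟨h21, Ne.symm hne'⟩)
    · exact hnoovl₁ z₂.1 z₂.2 (ovl_of_incomp hnonempty h12 h21)
  have hz₁nem : z₁.1.Nonempty := cs_nonempty h𝒞 z₁.2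
  have hu₁z₂ : u₁ ≠ z₂ := by
    intro he
    have hsub : z₁.1 ⊆ z₂.1 := by rw [← he]; exact hrtg_sub hu₁r
    obtain ⟨x, hx⟩ := hz₁nem
    exact absurd hdisj (Set.nonempty_iff_ne_empty.mp ⟨x, hx, hsub hx⟩)
  have hparents : ∀ z : N.V, z ∈ B → (∀ c ∈ B, ¬ c.1 ⊂ z.1) →
      ∃ Q₁ Q₂ : N.V, Q₁ ∈ B ∧ Q₂ ∈ B ∧ Q₁ ≠ Q₂ ∧ Cov 𝒞 Q₁.1 z.1 ∧ Cov 𝒞 Q₂.1 z.1 := by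
    intro z hzB hnb
    obtain ⟨n₁, hn₁, n₂, hn₂, hn12, ha₁, ha₂⟩ :=
      two_neighbors hbic hz₁B hz₂B hu₁B hne (Ne.symm hu₁ne) (Ne.symm hu₁z₂) hzB
    have conv : ∀ n, N.UG.Adj z n → n ∈ B → Cov 𝒞 n.1 z.1 := by
      intro n hadj hnB
      rcases hadj.2 with hE | hE
      · exact absurd (hE : Cov 𝒞 z.1 n.1).1 (hnb n hnB)
      · exact hE
    exact ⟨n₁, n₂, hn₁, hn₂, hn12, conv _ ha₁ hn₁, conv _ ha₂ hn₂⟩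
  obtain ⟨Q₁, Q₂, hQ₁B, hQ₂B, hQ12, hQc₁, hQc₂⟩ := hparents z₂ hz₂B hnb₂
  obtain ⟨R₁, R₂, hR₁B, hR₂B, hR12, hRc₁, hRc₂⟩ := hparents z₁ hz₁B hnb₁
  obtain ⟨T₁, hT₁𝒞, hT₁ub, hT₁min⟩ := exists_T h𝒞 hcl hP₁m
  obtain ⟨T₂, hT₂𝒞, hT₂ub, hT₂min⟩ := exists_T h𝒞 hcl hP₂m
  have h21 : T₂ ⊂ T₁ := tsub_step h𝒞 hcl hL hbic hz₁B hne hP₁m hT₁𝒞 hT₁ub hT₁min hT₂min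
    hQ₁B hQ₂B hQ12 hQc₁ hQc₂
  have h12 : T₁ ⊂ T₂ := tsub_step h𝒞 hcl hL hbic hz₂B (Ne.symm hne) hP₂m hT₂𝒞 hT₂ub hT₂min
    hT₁min hR₁B hR₂B hR12 hRc₁ hRc₂
  exact h21.not_subset h12.1

end Level1

end Aux2


/-- There exists a level-1 network `N` on `X` with `𝒞_N = 𝒞` iff the
clustering system `𝒞` is closed and satisfies property (L). -/
theorem level1_iff_closed_and_propertyL (X : Type) [Fintype X] (𝒞 : Set (Set X))
    (h𝒞 : IsClusteringSystem 𝒞) :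
    (∃ N : Network X, N.Level1 ∧ N.CS = 𝒞) ↔ (IsClosedCS 𝒞 ∧ PropertyL 𝒞) := by
  constructor
  · rintro ⟨N, hlvl, rfl⟩
    exact ⟨Network.forward_closed hlvl, Network.forward_L hlvl⟩
  · rintro ⟨hcl, hL⟩
    exact ⟨Hasse 𝒞 h𝒞, hasse_level1 h𝒞 hcl hL, hasse_CS h𝒞⟩

end PhyloNet
end

section
/- A network N is regular if and only if N is semi-regular (i.e., shortcut-free and satisfying (PCC)) and no vertex of N has outdegree 1. -/
namespace PhyloNet

variable {X : Type}

section Aux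

variable {X : Type}

lemma Network.reach_refl_s1 (N : Network X) (v : N.V) : N.reach v v :=
  Relation.ReflTransGen.refl

lemma Network.reach_trans_s1 (N : Network X) {u v w : N.V}
    (h1 : N.reach u v) (h2 : N.reach v w) : N.reach u w :=
  Relation.ReflTransGen.trans h1 h2

lemma Network.reach_single (N : Network X) {u v : N.V} (h : N.E u v) : N.reach u v :=
  Relation.ReflTransGen.single h

lemma Network.reach_cases (N : Network X) {u v : N.V} (h : N.reach u v) :
    u = v ∨ ∃ w, N.E u w ∧ N.reach w v :=
  Relation.ReflTransGen.cases_head h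

lemma Network.cluster_mono_s1 (N : Network X) {u v : N.V} (h : N.reach u v) :
    N.cluster v ⊆ N.cluster u := fun _ hx => N.reach_trans_s1 h hx

lemma Network.not_E_self (N : Network X) (v : N.V) : ¬ N.E v v :=
  fun h => N.acyclic v v h Relation.ReflTransGen.refl

/-- Key lemma for Regular → reach : if `cluster v ⊊ cluster u` then `reach u v`. -/
lemma Network.regular_reach [Fintype X] (N : Network X) (hreg : N.Regular) :
    ∀ n : ℕ, ∀ u v : N.V, (N.cluster u \ N.cluster v).ncard ≤ n →
      N.cluster v ⊂ N.cluster u → N.reach u v := by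
  intro n
  induction n with
  | zero =>
    intro u v hcard hss
    exfalso
    have h0 : (N.cluster u \ N.cluster v).ncard = 0 := Nat.le_zero.mp hcard
    have : N.cluster u \ N.cluster v = ∅ :=
      (Set.ncard_eq_zero (Set.toFinite _)).mp h0
    exact hss.2 (Set.diff_eq_empty.mp this)
  | succ n ih =>
    intro u v hcard hss
    by_cases h : ∃ w, N.cluster v ⊂ N.cluster w ∧ N.cluster w ⊂ N.cluster u
    · obtain ⟨w, h1, h2⟩ := h
      have d1 : N.cluster u \ N.cluster w ⊂ N.cluster u \ N.cluster v := by
        rw [Set.ssubset_iff_subset_ne]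
        refine ⟨Set.diff_subset_diff_right h1.1, ?_⟩
        obtain ⟨x, hxw, hxv⟩ := Set.exists_of_ssubset h1
        intro heq
        have hx1 : x ∈ N.cluster u \ N.cluster v := ⟨h2.1 hxw, hxv⟩
        rw [← heq] at hx1
        exact hx1.2 hxw
      have d2 : N.cluster w \ N.cluster v ⊂ N.cluster u \ N.cluster v := by
        rw [Set.ssubset_iff_subset_ne]
        refine ⟨Set.diff_subset_diff_left h2.1, ?_⟩
        obtain ⟨x, hxu, hxw⟩ := Set.exists_of_ssubset h2
        intro heq
        have hxv : x ∉ N.cluster v := fun hc => hxw (h1.1 hc)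
        have hx1 : x ∈ N.cluster u \ N.cluster v := ⟨hxu, hxv⟩
        rw [← heq] at hx1
        exact hxw hx1.1
      have c1 : (N.cluster u \ N.cluster w).ncard ≤ n := by
        have := Set.ncard_lt_ncard d1 (Set.toFinite _)
        omega
      have c2 : (N.cluster w \ N.cluster v).ncard ≤ n := by
        have := Set.ncard_lt_ncard d2 (Set.toFinite _)
        omega
      exact N.reach_trans_s1 (ih u w c1 h2) (ih w v c2 h1)
    · exact N.reach_single ((hreg.2 u v).mpr ⟨hss, h⟩)

end Aux

/-- A network is regular iff it is semi-regular and no vertex has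
outdegree 1. -/
theorem regular_iff_semiRegular_and_no_outdeg_one (X : Type) [Fintype X]
    (N : Network X) :
    N.Regular ↔ (N.SemiRegular ∧ ∀ v : N.V, N.outDeg v ≠ 1) := by
  constructor
  · -- Regular → semi-regular ∧ no outdeg 1
    intro hreg
    have hinj := hreg.1
    have reach_of : ∀ u v : N.V, N.cluster v ⊆ N.cluster u → N.reach u v := by
      intro u v hsub
      rcases eq_or_ne (N.cluster v) (N.cluster u) with he | hne
      · rw [hinj he]; exact N.reach_refl_s1 u
      · exact N.regular_reach hreg _ u v le_rfl (lt_of_le_of_ne hsub hne)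
    refine ⟨⟨?_, ?_⟩, ?_⟩
    · -- shortcut-free
      rintro u w ⟨huw, v, huv, hne, hvw⟩
      obtain ⟨hss, hno⟩ := (hreg.2 u w).mp huw
      have hwv : N.cluster w ⊆ N.cluster v := N.cluster_mono_s1 hvw
      have hne' : N.cluster w ≠ N.cluster v := fun h => hne (hinj h).symm
      exact hno ⟨v, lt_of_le_of_ne hwv hne', ((hreg.2 u v).mp huv).1⟩
    · -- PCC
      intro u v
      constructor
      · rintro (h | h)
        · exact Or.inr (N.cluster_mono_s1 h)
        · exact Or.inl (N.cluster_mono_s1 h)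
      · rintro (h | h)
        · exact Or.inr (reach_of v u h)
        · exact Or.inl (reach_of u v h)
    · -- no outdegree 1
      intro v hod
      obtain ⟨w, hw⟩ := Set.ncard_eq_one.mp hod
      have hEvw : N.E v w := by rw [Set.eq_singleton_iff_unique_mem] at hw; exact hw.1
      have huniq : ∀ u : N.V, N.E v u → u = w := by
        rw [Set.eq_singleton_iff_unique_mem] at hw; exact hw.2
      have hcl : N.cluster v = N.cluster w := by
        apply Set.Subset.antisymm
        · intro x hx
          rcases N.reach_cases hx with he | ⟨u, hEu, hu⟩
          · exfalso
            exact ((N.leaf_iff v).mpr ⟨x, he.symm⟩) w hEvw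
          · rwa [huniq u hEu] at hu
        · exact N.cluster_mono_s1 (N.reach_single hEvw)
      have := hinj hcl
      rw [this] at hEvw
      exact N.not_E_self w hEvw
  · -- semi-regular ∧ no outdeg 1 → Regular
    rintro ⟨⟨hsf, hpcc⟩, hod⟩
    -- Key claim: reach + equal clusters implies equality of vertices.
    have claim : ∀ u v : N.V, N.reach u v → N.cluster u = N.cluster v → u = v := by
      intro u v h he
      rcases N.reach_cases h with he' | ⟨w, hEuw, hrw⟩
      · exact he'
      exfalso
      -- u has a child w; outdeg u ≥ 2, pick another child w' ≠ w
      have hpos : 0 < N.outDeg u :=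
        (Set.ncard_pos (Set.toFinite _)).mpr ⟨w, hEuw⟩
      have h2 : 1 < N.outDeg u := lt_of_le_of_ne hpos (fun h => hod u h.symm)
      obtain ⟨w', hw'mem, hw'ne⟩ := Set.exists_ne_of_one_lt_ncard h2 w
      have hEuw' : N.E u w' := hw'mem
      -- cluster w' ⊆ cluster u = cluster v ⊆ cluster w
      have hsub : N.cluster w' ⊆ N.cluster w := by
        intro x hx
        have : x ∈ N.cluster u := N.cluster_mono_s1 (N.reach_single hEuw') hx
        rw [he] at this
        exact N.cluster_mono_s1 hrw this
      rcases (hpcc w' w).mpr (Or.inl hsub) with hr | hr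
      · exact hsf u w ⟨hEuw, w', hEuw', hw'ne, hr⟩
      · exact hsf u w' ⟨hEuw', w, hEuw, (Ne.symm hw'ne), hr⟩
    have hinj : Function.Injective N.cluster := by
      intro u v he
      rcases (hpcc u v).mpr (Or.inl he.le) with hr | hr
      · exact claim u v hr he
      · exact (claim v u hr he.symm).symm
    -- from strict cluster inclusion get reach
    have reach_of : ∀ u v : N.V, N.cluster v ⊂ N.cluster u → N.reach u v := by
      intro u v hss
      rcases (hpcc u v).mpr (Or.inr hss.1) with hr | hr
      · exact hr
      · exact absurd (N.cluster_mono_s1 hr) hss.2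
    refine ⟨hinj, ?_⟩
    intro u v
    constructor
    · intro hE
      have hsub : N.cluster v ⊆ N.cluster u := N.cluster_mono_s1 (N.reach_single hE)
      have hne : N.cluster v ≠ N.cluster u := by
        intro h
        have : v = u := hinj h
        rw [this] at hE
        exact N.not_E_self u hE
      refine ⟨lt_of_le_of_ne hsub hne, ?_⟩
      rintro ⟨w, h1, h2⟩
      have hruw : N.reach u w := reach_of u w h2
      have hrwv : N.reach w v := reach_of w v h1
      rcases N.reach_cases hruw with he | ⟨w1, hEw1, hrw1⟩
      · rw [he] at h2; exact h2.2 le_rfl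
      · have hrw1v : N.reach w1 v := N.reach_trans_s1 hrw1 hrwv
        have hw1v : w1 ≠ v := by
          intro h
          rw [h] at hrw1
          exact h1.2 (N.cluster_mono_s1 hrw1)
        exact hsf u v ⟨hE, w1, hEw1, hw1v, hrw1v⟩
    · rintro ⟨hss, hno⟩
      have hruv : N.reach u v := reach_of u v hss
      rcases N.reach_cases hruv with he | ⟨w1, hEw1, hrw1⟩
      · exact absurd (congrArg N.cluster he) (fun h => hss.2 h.le)
      rcases eq_or_ne w1 v with he | hne
      · rwa [he] at hEw1
      exfalso
      apply hno
      refine ⟨w1, ?_, ?_⟩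
      · exact lt_of_le_of_ne (N.cluster_mono_s1 hrw1) (fun h => hne (hinj h).symm)
      · refine lt_of_le_of_ne (N.cluster_mono_s1 (N.reach_single hEw1)) ?_
        intro h
        have : w1 = u := hinj h
        rw [this] at hEw1
        exact N.not_E_self u hEw1

end PhyloNet
end

section
/- For every clustering system 𝒞 on a finite set X there exists a regular network N on X with 𝒞_N = 𝒞, and N is unique in the sense that any regular network N' on X with 𝒞_{N'} = 𝒞 is isomorphic to N via a digraph isomorphism fixing every element of X. -/
namespace PhyloNet

variable {X : Type}

section HasseConstruction

variable {X : Type} [Fintype X]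

/-- In any network, the cluster of the leaf `x` is `{x}`. -/
lemma Network.cluster_leafEmb (N : Network X) (x : X) :
    N.cluster (N.leafEmb x) = {x} := by
  have hleaf : ∀ w, ¬ N.E (N.leafEmb x) w := (N.leaf_iff _).mpr ⟨x, rfl⟩
  ext y
  simp only [Network.cluster, Set.mem_setOf_eq, Set.mem_singleton_iff]
  constructor
  · intro h
    rcases Relation.ReflTransGen.cases_head h with h | ⟨c, hc, _⟩
    · exact (N.leafEmb_inj h).symm
    · exact absurd hc (hleaf c)
  · rintro rfl; exact Relation.ReflTransGen.refl

/-- The covering relation of the Hasse diagram of `𝒞`. -/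
def covE (𝒞 : Set (Set X)) (u v : {C : Set X // C ∈ 𝒞}) : Prop :=
  v.val ⊂ u.val ∧ ¬ ∃ w ∈ 𝒞, v.val ⊂ w ∧ w ⊂ u.val

lemma covE_subset {𝒞 : Set (Set X)} {u v : {C : Set X // C ∈ 𝒞}}
    (h : Relation.ReflTransGen (covE 𝒞) u v) : v.val ⊆ u.val := by
  induction h with
  | refl => exact subset_rfl
  | tail _ h ih => exact h.1.subset.trans ih

/-- If `x ∈ C` and `C ≠ {x}`, there is a cover `D` of the Hasse diagram below `C`
containing `x`. -/
lemma exists_cov_below {𝒞 : Set (Set X)} (h𝒞 : IsClusteringSystem 𝒞)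
    {C : Set X} (hC : C ∈ 𝒞) {x : X} (hx : x ∈ C) (hne : C ≠ {x}) :
    ∃ D, ∃ hD : D ∈ 𝒞, x ∈ D ∧ covE 𝒞 ⟨C, hC⟩ ⟨D, hD⟩ := by
  set S : Set (Set X) := {D | D ∈ 𝒞 ∧ x ∈ D ∧ D ⊂ C} with hS
  have hxS : {x} ∈ S := by
    refine ⟨h𝒞.2.2 x, rfl, ?_⟩
    exact HasSubset.Subset.ssubset_of_ne (Set.singleton_subset_iff.mpr hx) (Ne.symm hne)
  obtain ⟨D, hDS, hmax⟩ := Set.Finite.exists_maximalFor id S (Set.toFinite S) ⟨_, hxS⟩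
  refine ⟨D, hDS.1, hDS.2.1, hDS.2.2, ?_⟩
  rintro ⟨w, hw𝒞, hDw, hwC⟩
  have hwS : w ∈ S := ⟨hw𝒞, hDw.subset hDS.2.1, hwC⟩
  exact hDw.not_subset (hmax hwS hDw.subset)

/-- If `C ≠ univ`, some cover of `C` exists above it. -/
lemma exists_cov_above {𝒞 : Set (Set X)} (h𝒞 : IsClusteringSystem 𝒞)
    {C : Set X} (hC : C ∈ 𝒞) (hne : C ≠ Set.univ) :
    ∃ D, ∃ hD : D ∈ 𝒞, covE 𝒞 ⟨D, hD⟩ ⟨C, hC⟩ := by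
  set S : Set (Set X) := {D | D ∈ 𝒞 ∧ C ⊂ D} with hS
  have huS : Set.univ ∈ S :=
    ⟨h𝒞.2.1, HasSubset.Subset.ssubset_of_ne (Set.subset_univ C) hne⟩
  obtain ⟨D, hDS, hmin⟩ := Set.Finite.exists_minimalFor id S (Set.toFinite S) ⟨_, huS⟩
  refine ⟨D, hDS.1, hDS.2, ?_⟩
  rintro ⟨w, hw𝒞, hCw, hwD⟩
  have hwS : w ∈ S := ⟨hw𝒞, hCw⟩
  exact hwD.not_subset (hmin hwS hwD.subset)

lemma reach_singleton {𝒞 : Set (Set X)} (h𝒞 : IsClusteringSystem 𝒞) :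
    ∀ n (C : Set X) (hC : C ∈ 𝒞) (x : X), C.ncard ≤ n → x ∈ C →
      Relation.ReflTransGen (covE 𝒞) ⟨C, hC⟩ ⟨{x}, h𝒞.2.2 x⟩ := by
  intro n
  induction n with
  | zero =>
    intro C hC x hn hx
    exfalso
    have : 0 < C.ncard := (Set.ncard_pos (Set.toFinite C)).mpr ⟨x, hx⟩
    omega
  | succ n ih =>
    intro C hC x hn hx
    by_cases hCx : C = {x}
    · have : (⟨C, hC⟩ : {C : Set X // C ∈ 𝒞}) = ⟨{x}, h𝒞.2.2 x⟩ := Subtype.ext hCx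
      rw [this]
    · obtain ⟨D, hD, hxD, hcov⟩ := exists_cov_below h𝒞 hC hx hCx
      have hDC : D ⊂ C := hcov.1
      have : D.ncard ≤ n := by
        have := Set.ncard_lt_ncard hDC (Set.toFinite C)
        omega
      exact Relation.ReflTransGen.head hcov (ih D hD x this hxD)

/-- The Hasse-diagram network of a clustering system. -/
noncomputable def hasseNet (𝒞 : Set (Set X)) (h𝒞 : IsClusteringSystem 𝒞) :
    Network X where
  V := {C : Set X // C ∈ 𝒞}
  fintypeV := Fintype.ofFinite _
  E := covE 𝒞
  leafEmb x := ⟨{x}, h𝒞.2.2 x⟩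
  leafEmb_inj := by
    intro x y h
    simpa using congrArg Subtype.val h
  acyclic := by
    intro u v h hr
    exact h.1.not_subset (covE_subset hr)
  root_unique := by
    refine ⟨⟨Set.univ, h𝒞.2.1⟩, fun u h => ?_, fun r hr => ?_⟩
    · exact h.1.not_subset (Set.subset_univ _)
    · by_contra hne
      have hne' : r.val ≠ Set.univ := fun h => hne (Subtype.ext h)
      obtain ⟨D, hD, hcov⟩ := exists_cov_above h𝒞 r.2 hne'
      exact hr ⟨D, hD⟩ (by simpa using hcov)
  leaf_iff := by
    intro v
    constructor
    · intro h
      have hvne : v.val.Nonempty := by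
        rcases Set.eq_empty_or_nonempty v.val with he | hn
        · exact absurd (he ▸ v.2) h𝒞.1
        · exact hn
      obtain ⟨x, hx⟩ := hvne
      refine ⟨x, ?_⟩
      by_cases hvx : v.val = {x}
      · exact Subtype.ext hvx.symm
      · exfalso
        obtain ⟨D, hD, _, hcov⟩ := exists_cov_below h𝒞 v.2 hx hvx
        exact h ⟨D, hD⟩ (by simpa using hcov)
    · rintro ⟨x, rfl⟩ w hw
      have : w.val ⊂ {x} := hw.1
      rcases Set.ssubset_singleton_iff.mp this with h
      exact h𝒞.1 (h ▸ w.2)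

lemma hasseNet_cluster {𝒞 : Set (Set X)} (h𝒞 : IsClusteringSystem 𝒞)
    (v : (hasseNet 𝒞 h𝒞).V) : (hasseNet 𝒞 h𝒞).cluster v = v.val := by
  ext x
  simp only [Network.cluster, Set.mem_setOf_eq]
  constructor
  · intro h
    have := covE_subset h
    exact this rfl
  · intro hx
    exact reach_singleton h𝒞 v.val.ncard v.val v.2 x le_rfl hx

end HasseConstruction

/-- For every clustering system there is a regular network with this
clustering system, unique up to a digraph isomorphism fixing all leaves. -/
theorem exists_unique_regular_network (X : Type) [Fintype X] (𝒞 : Set (Set X))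
    (h𝒞 : IsClusteringSystem 𝒞) :
    ∃ N : Network X, N.Regular ∧ N.CS = 𝒞 ∧
      ∀ N' : Network X, N'.Regular → N'.CS = 𝒞 → N.Isomorphic N' := by
  refine ⟨hasseNet 𝒞 h𝒞, ⟨?_, ?_⟩, ?_, ?_⟩
  · -- cluster injective
    intro u v h
    rw [hasseNet_cluster, hasseNet_cluster] at h
    exact Subtype.ext h
  · -- Hasse edge characterization
    intro u v
    show covE 𝒞 u v ↔ _
    rw [hasseNet_cluster, hasseNet_cluster]
    constructor
    · rintro ⟨hsub, hnone⟩
      refine ⟨hsub, ?_⟩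
      rintro ⟨w, hw1, hw2⟩
      rw [hasseNet_cluster] at hw1 hw2
      exact hnone ⟨w.val, w.2, hw1, hw2⟩
    · rintro ⟨hsub, hnone⟩
      refine ⟨hsub, ?_⟩
      rintro ⟨w, hw𝒞, hw1, hw2⟩
      have hc := hasseNet_cluster h𝒞 ⟨w, hw𝒞⟩
      exact hnone ⟨⟨w, hw𝒞⟩, ssubset_of_ssubset_of_subset hw1 hc.ge, ssubset_of_subset_of_ssubset hc.le hw2⟩
  · -- CS = 𝒞
    ext C
    constructor
    · rintro ⟨v, rfl⟩
      rw [hasseNet_cluster]; exact v.2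
    · intro hC
      exact ⟨⟨C, hC⟩, hasseNet_cluster h𝒞 _⟩
  · -- uniqueness
    intro N' reg' hCS'
    have hmem : ∀ u : N'.V, N'.cluster u ∈ 𝒞 := by
      intro u; rw [← hCS']; exact ⟨u, rfl⟩
    set ψ : N'.V → (hasseNet 𝒞 h𝒞).V := fun u => ⟨N'.cluster u, hmem u⟩ with hψ
    have hψinj : Function.Injective ψ := by
      intro a b h
      exact reg'.1 (congrArg Subtype.val h)
    have hψsurj : Function.Surjective ψ := by
      intro v
      have : v.val ∈ N'.CS := hCS' ▸ v.2
      obtain ⟨u, hu⟩ := this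
      exact ⟨u, Subtype.ext hu⟩
    set e := Equiv.ofBijective ψ ⟨hψinj, hψsurj⟩ with he
    refine ⟨e.symm, ?_, ?_⟩
    · have hcl : ∀ v : (hasseNet 𝒞 h𝒞).V, N'.cluster (e.symm v) = v.val := by
        intro v
        have : ψ (e.symm v) = v := e.apply_symm_apply v
        exact congrArg Subtype.val this
      intro u v
      rw [reg'.2, hcl, hcl]
      show covE 𝒞 u v ↔ _
      constructor
      · rintro ⟨hsub, hnone⟩
        refine ⟨hsub, ?_⟩
        rintro ⟨w, hw1, hw2⟩
        exact hnone ⟨N'.cluster w, hmem w, hw1, hw2⟩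
      · rintro ⟨hsub, hnone⟩
        refine ⟨hsub, ?_⟩
        rintro ⟨w, hw𝒞, hw1, hw2⟩
        obtain ⟨u', hu'⟩ := hψsurj ⟨w, hw𝒞⟩
        have : N'.cluster u' = w := congrArg Subtype.val hu'
        exact hnone ⟨u', this ▸ hw1, this ▸ hw2⟩
    · intro x
      rw [Equiv.symm_apply_eq]
      refine Subtype.ext ?_
      show ({x} : Set X) = N'.cluster (N'.leafEmb x)
      rw [N'.cluster_leafEmb]

end PhyloNet
end

section
/- Let N be a network satisfying (PCC). Then N is an lca-network if and only if its clustering system 𝒞_N is closed. -/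
namespace PhyloNet

variable {X : Type}

section Aux

variable {X : Type} (N : Network X)

lemma aux_not_transGen_self (v : N.V) : ¬ Relation.TransGen N.E v v := by
  intro h
  obtain ⟨w, hvw, hwv⟩ := Relation.TransGen.head'_iff.mp h
  exact N.acyclic v w hvw hwv

/-- The "strict descendant" relation is well-founded. -/
lemma aux_desc_wf : WellFounded (fun a b : N.V => Relation.TransGen N.E b a) := by
  have : IsTrans N.V (fun a b : N.V => Relation.TransGen N.E b a) :=
    ⟨fun a b c hab hbc => hbc.trans hab⟩
  have : IsIrrefl N.V (fun a b : N.V => Relation.TransGen N.E b a) :=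
    ⟨fun a => aux_not_transGen_self N a⟩
  exact Finite.wellFounded_of_trans_of_irrefl _

/-- The "strict ancestor" relation is well-founded. -/
lemma aux_anc_wf : WellFounded (fun a b : N.V => Relation.TransGen N.E a b) := by
  have : IsTrans N.V (fun a b : N.V => Relation.TransGen N.E a b) :=
    ⟨fun a b c hab hbc => hab.trans hbc⟩
  have : IsIrrefl N.V (fun a b : N.V => Relation.TransGen N.E a b) :=
    ⟨fun a => aux_not_transGen_self N a⟩
  exact Finite.wellFounded_of_trans_of_irrefl _

lemma aux_cluster_mono {u v : N.V} (h : N.reach u v) : N.cluster v ⊆ N.cluster u :=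
  fun _ hx => Relation.ReflTransGen.trans h hx

lemma aux_cluster_nonempty (v : N.V) : (N.cluster v).Nonempty := by
  induction v using (aux_desc_wf N).induction with
  | _ v ih =>
    by_cases h : ∀ w : N.V, ¬ N.E v w
    · obtain ⟨x, hx⟩ := (N.leaf_iff v).mp h
      exact ⟨x, by rw [← hx] at *; exact Relation.ReflTransGen.refl⟩
    · push_neg at h
      obtain ⟨w, hw⟩ := h
      obtain ⟨x, hx⟩ := ih w (Relation.TransGen.single hw)
      exact ⟨x, Relation.ReflTransGen.head hw hx⟩

lemma aux_root_reaches : ∃ r : N.V, ∀ v : N.V, N.reach r v := by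
  obtain ⟨r, hr, hru⟩ := N.root_unique
  refine ⟨r, fun v => ?_⟩
  induction v using (aux_anc_wf N).induction with
  | _ v ih =>
    by_cases h : ∀ u : N.V, ¬ N.E u v
    · rw [hru v h]
      exact Relation.ReflTransGen.refl
    · push_neg at h
      obtain ⟨u, hu⟩ := h
      exact (ih u (Relation.TransGen.single hu)).tail hu

/-- Any nonempty set of vertices containing only common ancestors of `A`,
closed downwards in an appropriate sense, yields an element of `LCA A`. -/
lemma aux_min_lca {A : Set X} (hA : A.Nonempty) {u : N.V} (hu : A ⊆ N.cluster u) :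
    ∃ m : N.V, m ∈ N.LCA A ∧ N.reach u m := by
  have hne : {z : N.V | N.reach u z ∧ A ⊆ N.cluster z}.Nonempty :=
    ⟨u, Relation.ReflTransGen.refl, hu⟩
  obtain ⟨m, ⟨hum, hAm⟩, hmin⟩ := (aux_desc_wf N).has_min _ hne
  refine ⟨m, ⟨hAm, fun z hz hmz => ?_⟩, hum⟩
  rcases Relation.reflTransGen_iff_eq_or_transGen.mp hmz with h | h
  · exact h
  · exact absurd h (hmin z ⟨hum.trans hmz, hz⟩)

end Aux

/-- A network satisfying (PCC) is an lca-network iff its clustering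
system is closed. -/
theorem pcc_lcaNetwork_iff_closed (X : Type) [Fintype X] (N : Network X)
    (hPCC : N.PCC) :
    N.LcaNetwork ↔ IsClosedCS N.CS := by
  constructor
  · -- lca-network → closed
    rintro hlca A ⟨u, rfl⟩ B ⟨v, rfl⟩ hAB
    obtain ⟨c, hc⟩ := hlca _ hAB
    obtain ⟨m, hm, hum⟩ := aux_min_lca N hAB Set.inter_subset_left
    obtain ⟨m', hm', hvm'⟩ := aux_min_lca N hAB Set.inter_subset_right
    rw [hc, Set.mem_singleton_iff] at hm hm'
    rw [hm] at hum; rw [hm'] at hvm'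
    refine ⟨c, ?_⟩
    apply Set.Subset.antisymm
    · exact Set.subset_inter ((aux_cluster_mono N hum)) ((aux_cluster_mono N hvm'))
    · -- A ∩ B ⊆ cluster m
      have : c ∈ N.LCA (N.cluster u ∩ N.cluster v) := by rw [hc]; rfl
      exact this.1
  · -- closed → lca-network
    intro hC A hA
    obtain ⟨r, hr⟩ := aux_root_reaches N
    have hAr : A ⊆ N.cluster r := fun x _ => hr _
    obtain ⟨m, hm, -⟩ := aux_min_lca N hA hAr
    refine ⟨m, Set.eq_singleton_iff_unique_mem.mpr ⟨hm, fun w' hw' => ?_⟩⟩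
    -- the key claim: clusters of any two elements of LCA A coincide
    have key : ∀ a b : N.V, a ∈ N.LCA A → b ∈ N.LCA A → N.cluster a ⊆ N.cluster b := by
      intro a b ha hb
      have hne : (N.cluster a ∩ N.cluster b).Nonempty :=
        hA.mono (Set.subset_inter ha.1 hb.1)
      obtain ⟨z, hz⟩ := hC _ ⟨a, rfl⟩ _ ⟨b, rfl⟩ hne
      have hAz : A ⊆ N.cluster z := hz ▸ Set.subset_inter ha.1 hb.1
      have hza : N.cluster z ⊆ N.cluster a := hz ▸ Set.inter_subset_left
      have hzb : N.cluster z ⊆ N.cluster b := hz ▸ Set.inter_subset_right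
      rcases (hPCC z a).mpr (Or.inl hza) with h | h
      · -- reach z a : cluster a ⊆ cluster z
        exact (aux_cluster_mono N h).trans hzb
      · -- reach a z : minimality of a gives z = a
        have := ha.2 z hAz h
        rw [← this]; exact hzb
    have hcl : N.cluster m = N.cluster w' :=
      Set.Subset.antisymm (key m w' hm hw') (key w' m hw' hm)
    rcases (hPCC m w').mpr (Or.inl hcl.le) with h | h
    · exact hm.2 w' hw'.1 h
    · exact (hw'.2 m hm.1 h).symm

end PhyloNet
end
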